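/- arXiv:2210.11053 — 2 statements merged into one kernel-verified Lean document; each statement's English description precedes it below -/
import Mathlib

section
/- For each n ∈ ℕ, let (Â^{(n)}_{ij})_{1≤i,j≤n} be mutually independent Poisson random variables with means μ^{(n)}_{ij} satisfying μ^{(n)}_{ij} ≤ C for a constant C independent of n. Then n^{-3}·( Σ_{i,j,k≤n} Â^{(n)}_{ik} Â^{(n)}_{kj} − Σ_{i,j,k≤n} μ^{(n)}_{ik} μ^{(n)}_{kj} ) converges to 0 in probability as n → ∞. -/
open MeasureTheory ProbabilityTheory Filter
open scoped ProbabilityTheory NNReal ENNReal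

section PoissonAux

lemma pois_mul_succ (r : ℝ≥0) (k : ℕ) :
    poissonPMFReal r (k+1) * ((k:ℝ)+1) = r * poissonPMFReal r k := by
  unfold poissonPMFReal
  rw [Nat.factorial_succ]
  have hk : ((k:ℝ)+1) ≠ 0 := by positivity
  have hf : (k.factorial : ℝ) ≠ 0 := by exact_mod_cast k.factorial_ne_zero
  push_cast
  field_simp
  ring

lemma pois_mul_succ2 (r : ℝ≥0) (k : ℕ) :
    poissonPMFReal r (k+2) * (((k:ℝ)+2) * ((k:ℝ)+1)) = (r:ℝ)^2 * poissonPMFReal r k := by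
  unfold poissonPMFReal
  rw [show k+2 = (k+1)+1 by ring, Nat.factorial_succ, Nat.factorial_succ]
  have hk1 : ((k:ℝ)+1) ≠ 0 := by positivity
  have hk2 : ((k:ℝ)+2) ≠ 0 := by positivity
  have hf : (k.factorial : ℝ) ≠ 0 := by exact_mod_cast k.factorial_ne_zero
  push_cast
  field_simp
  ring

lemma pois_hasSum_id (r : ℝ≥0) :
    HasSum (fun k : ℕ => poissonPMFReal r k * (k:ℝ)) r := by
  have h0 := (poissonPMFRealSum r).mul_left (r:ℝ)
  rw [mul_one] at h0
  have hfe : (fun n : ℕ => poissonPMFReal r (n+1) * ((n+1:ℕ):ℝ))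
      = fun n => (r:ℝ) * poissonPMFReal r n := by
    funext n; push_cast; exact pois_mul_succ r n
  have h1 : HasSum (fun n : ℕ => poissonPMFReal r (n+1) * ((n+1:ℕ):ℝ)) (r:ℝ) := by
    rw [hfe]; exact h0
  have h2 := (hasSum_nat_add_iff (f := fun k : ℕ => poissonPMFReal r k * (k:ℝ)) 1).mp h1
  simpa using h2

lemma pois_hasSum_sq (r : ℝ≥0) :
    HasSum (fun k : ℕ => poissonPMFReal r k * (k:ℝ)^2) ((r:ℝ)^2 + r) := by
  have h0 := (poissonPMFRealSum r).mul_left ((r:ℝ)^2)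
  rw [mul_one] at h0
  have hfe : (fun n : ℕ => poissonPMFReal r (n+2) * (((n+2:ℕ):ℝ) * (((n+2:ℕ):ℝ)-1)))
      = fun n => (r:ℝ)^2 * poissonPMFReal r n := by
    funext n
    push_cast
    rw [show ((n:ℝ)+2) - 1 = (n:ℝ)+1 by ring]
    exact pois_mul_succ2 r n
  have h1 : HasSum (fun n : ℕ =>
      poissonPMFReal r (n+2) * (((n+2:ℕ):ℝ) * (((n+2:ℕ):ℝ)-1))) ((r:ℝ)^2) := by
    rw [hfe]; exact h0
  have h2 := (hasSum_nat_add_iff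
    (f := fun k : ℕ => poissonPMFReal r k * ((k:ℝ) * ((k:ℝ)-1))) 2).mp h1
  simp [Finset.sum_range_succ] at h2
  have h3 := h2.add (pois_hasSum_id r)
  have he : (fun k : ℕ => poissonPMFReal r k * ((k:ℝ)*((k:ℝ)-1)) + poissonPMFReal r k * (k:ℝ))
      = fun k => poissonPMFReal r k * (k:ℝ)^2 := by funext k; ring
  rwa [he] at h3

lemma pois_meas_singleton (r : ℝ≥0) (a : ℕ) :
    (poissonMeasure r) {a} = ENNReal.ofReal (poissonPMFReal r a) := by
  rw [poissonMeasure_singleton]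
  rfl

lemma pois_integrable {r : ℝ≥0} {f : ℕ → ℝ} (hf : ∀ k, 0 ≤ f k) {S : ℝ}
    (h : HasSum (fun k => poissonPMFReal r k * f k) S) :
    Integrable f (poissonMeasure r) := by
  refine ⟨(measurable_from_top (f := f)).aestronglyMeasurable, ?_⟩
  rw [HasFiniteIntegral, lintegral_countable']
  have step : ∀ a : ℕ, ‖f a‖ₑ * (poissonMeasure r) {a}
      = ENNReal.ofReal (poissonPMFReal r a * f a) := by
    intro a
    rw [pois_meas_singleton, ENNReal.ofReal_mul poissonPMFReal_nonneg,
      ← Real.enorm_eq_ofReal (hf a)]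
    ring
  rw [tsum_congr step,
    ← ENNReal.ofReal_tsum_of_nonneg (fun a => mul_nonneg poissonPMFReal_nonneg (hf a)) h.summable]
  exact ENNReal.ofReal_lt_top

lemma pois_integral {r : ℝ≥0} {f : ℕ → ℝ} (hf : ∀ k, 0 ≤ f k) {S : ℝ}
    (h : HasSum (fun k => poissonPMFReal r k * f k) S) :
    ∫ a, f a ∂(poissonMeasure r) = S := by
  have hint : Integrable f (poissonMeasure r) := pois_integrable hf h
  rw [integral_poissonMeasure' hint]
  exact h.tsum_eq

variable {Ω : Type*} [MeasureSpace Ω] [IsProbabilityMeasure (ℙ : Measure Ω)]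

lemma pois_aemeasurable (X : Ω → ℕ) (r : ℝ≥0)
    (h : Measure.map X ℙ = poissonMeasure r) : AEMeasurable X ℙ := by
  by_contra h'
  rw [Measure.map_of_not_aemeasurable h'] at h
  exact (IsProbabilityMeasure.ne_zero (poissonMeasure r)) h.symm

lemma pois_memLp (X : Ω → ℕ) (r : ℝ≥0)
    (h : Measure.map X ℙ = poissonMeasure r) :
    MemLp (fun ω => (X ω : ℝ)) 2 ℙ := by
  have hae := pois_aemeasurable X r h
  have hXm : AEStronglyMeasurable (fun ω => (X ω : ℝ)) ℙ :=
    (measurable_from_top.comp_aemeasurable hae).aestronglyMeasurable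
  have hsq : Integrable (fun x : ℕ => (x:ℝ)^2) (poissonMeasure r) :=
    pois_integrable (fun k => sq_nonneg _) (pois_hasSum_sq r)
  rw [← h] at hsq
  have hint := (integrable_map_measure
    (measurable_from_top (f := fun x : ℕ => (x:ℝ)^2)).aestronglyMeasurable hae).mp hsq
  exact (memLp_two_iff_integrable_sq hXm).mpr hint

lemma pois_mean (X : Ω → ℕ) (r : ℝ≥0)
    (h : Measure.map X ℙ = poissonMeasure r) :
    ∫ ω, (X ω : ℝ) ∂ℙ = r := by
  have hae := pois_aemeasurable X r h
  have h1 := integral_map hae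
    (measurable_from_top (f := fun x : ℕ => (x:ℝ))).aestronglyMeasurable
  rw [h] at h1
  rw [← h1, pois_integral (fun k => Nat.cast_nonneg k) (pois_hasSum_id r)]

lemma pois_sq_moment (X : Ω → ℕ) (r : ℝ≥0)
    (h : Measure.map X ℙ = poissonMeasure r) :
    ∫ ω, (X ω : ℝ)^2 ∂ℙ = (r:ℝ)^2 + r := by
  have hae := pois_aemeasurable X r h
  have h1 := integral_map hae
    (measurable_from_top (f := fun x : ℕ => (x:ℝ)^2)).aestronglyMeasurable
  rw [h] at h1
  rw [← h1, pois_integral (fun k => sq_nonneg _) (pois_hasSum_sq r)]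

lemma pois_variance (X : Ω → ℕ) (r : ℝ≥0)
    (h : Measure.map X ℙ = poissonMeasure r) :
    variance (fun ω => (X ω : ℝ)) ℙ = r := by
  rw [variance_eq_sub (pois_memLp X r h)]
  have h2 : (fun ω => (X ω : ℝ)) ^ 2 = fun ω => (X ω : ℝ)^2 := by
    funext ω; simp [Pi.pow_apply]
  have hEX : (ℙ : Measure Ω)[fun ω => (X ω : ℝ)] = (r:ℝ) := pois_mean X r h
  have hEX2 : (ℙ : Measure Ω)[(fun ω => (X ω : ℝ)) ^ 2] = (r:ℝ)^2 + (r:ℝ) := by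
    rw [h2]; exact pois_sq_moment X r h
  rw [hEX, hEX2]; ring

end PoissonAux

lemma sqrt_tendsto_atTop' : Tendsto Real.sqrt atTop atTop := by
  refine tendsto_atTop_atTop.2 fun b => ⟨(max b 0)^2, fun a ha => ?_⟩
  calc b ≤ max b 0 := le_max_left _ _
    _ = Real.sqrt ((max b 0)^2) := (Real.sqrt_sq (le_max_right _ _)).symm
    _ ≤ Real.sqrt a := Real.sqrt_le_sqrt ha

lemma two_abs_le (t w : ℝ) (ht : 0 < t) : |w| ≤ (w^2/t + t)/2 := by
  have h : 2*t * |w| ≤ w^2 + t^2 := by nlinarith [sq_nonneg (|w| - t), sq_abs w]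
  have h2 : (2*t * |w|)/(2*t) ≤ (w^2 + t^2)/(2*t) :=
    (div_le_div_iff_of_pos_right (by positivity)).mpr h
  calc |w| = (2*t * |w|)/(2*t) := by field_simp
    _ ≤ (w^2 + t^2)/(2*t) := h2
    _ = (w^2/t + t)/2 := by field_simp

lemma abs_mul_le' (t u v : ℝ) (ht : 0 < t) : |u| * |v| ≤ (t*u^2 + v^2/t)/2 := by
  have h : 2*t*(|u| * |v|) ≤ t^2*u^2 + v^2 := by
    nlinarith [sq_nonneg (t*|u| - |v|), sq_abs u, sq_abs v]
  have h2 : (2*t*(|u| * |v|))/(2*t) ≤ (t^2*u^2 + v^2)/(2*t) :=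
    (div_le_div_iff_of_pos_right (by positivity)).mpr h
  calc |u| * |v| = (2*t*(|u| * |v|))/(2*t) := by field_simp
    _ ≤ (t^2*u^2 + v^2)/(2*t) := h2
    _ = (t*u^2 + v^2/t)/2 := by field_simp

lemma abs_mul_le_quad (t a b x y : ℝ) (ht : 0 < t) (ha : 0 ≤ a) :
    |x*y - a*b| ≤ (t*(x-a)^2 + y^2/t)/2 + a*((y-b)^2/t + t)/2 := by
  have h1 : |x*y - a*b| ≤ |(x-a)*y| + a*|y-b| := by
    have he : x*y - a*b = (x-a)*y + a*(y-b) := by ring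
    rw [he]
    refine (abs_add_le _ _).trans ?_
    rw [abs_mul, abs_mul, abs_of_nonneg ha]
  refine h1.trans (add_le_add ?_ ?_)
  · rw [abs_mul]; exact abs_mul_le' t (x-a) y ht
  · calc a * |y-b| ≤ a * (((y-b)^2/t + t)/2) :=
        mul_le_mul_of_nonneg_left (two_abs_le t (y-b) ht) ha
      _ = a*((y-b)^2/t + t)/2 := by ring

lemma walks_arith (K nn : ℝ) (hK : 0 ≤ K) (hn : 1 ≤ nn) :
    (nn^3)⁻¹ * (nn * ((Real.sqrt nn*(K*nn) + ((K*nn) + (K*nn)^2)/Real.sqrt nn)/2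
      + (K*nn)*((K*nn)/Real.sqrt nn + Real.sqrt nn)/2))
    ≤ (K^2 + 2*K + 1)/Real.sqrt nn := by
  obtain ⟨t, ht1, rfl⟩ : ∃ t : ℝ, 1 ≤ t ∧ nn = t^2 :=
    ⟨Real.sqrt nn, by
      rw [show (1:ℝ) = Real.sqrt 1 by simp]
      exact Real.sqrt_le_sqrt hn, (Real.sq_sqrt (by linarith)).symm⟩
  have ht0 : 0 < t := lt_of_lt_of_le one_pos ht1
  rw [Real.sqrt_sq ht0.le]
  have hL : ((t^2)^3)⁻¹ * (t^2 * ((t*(K*t^2) + ((K*t^2) + (K*t^2)^2)/t)/2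
      + (K*t^2)*((K*t^2)/t + t)/2)) = ((2*K + 2*K^2)*t^2 + K)/(2*t^3) := by
    field_simp
    ring
  rw [hL, div_le_div_iff₀ (by positivity) ht0]
  have ht3 : t ≤ t^3 := by nlinarith
  nlinarith [mul_nonneg hK (sub_nonneg.mpr ht3), mul_nonneg hK (pow_nonneg ht0.le 3),
    pow_nonneg ht0.le 3]

lemma sum3_swap {n : ℕ} (f g : Fin n → Fin n → ℝ) :
    (∑ i : Fin n, ∑ j : Fin n, ∑ k : Fin n, f i k * g k j)
      = ∑ k : Fin n, (∑ i : Fin n, f i k) * (∑ j : Fin n, g k j) := by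
  calc (∑ i : Fin n, ∑ j : Fin n, ∑ k : Fin n, f i k * g k j)
      = ∑ i : Fin n, ∑ k : Fin n, ∑ j : Fin n, f i k * g k j :=
        Finset.sum_congr rfl fun i _ => by rw [Finset.sum_comm]
    _ = ∑ k : Fin n, ∑ i : Fin n, ∑ j : Fin n, f i k * g k j := by rw [Finset.sum_comm]
    _ = ∑ k : Fin n, (∑ i : Fin n, f i k) * (∑ j : Fin n, g k j) := by
        refine Finset.sum_congr rfl fun k _ => ?_
        rw [Finset.sum_mul]
        refine Finset.sum_congr rfl fun i _ => ?_
        rw [Finset.mul_sum]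

/-- for each `n`, let `(Â^{(n)}_{ij})_{i,j ≤ n}` be mutually independent
Poisson random variables with uniformly bounded means `μ^{(n)}_{ij} ≤ C`.  Then the
normalized count of directed walks of length 2,
`n⁻³ (∑_{i,j,k} Â_{ik} Â_{kj} − ∑_{i,j,k} μ_{ik} μ_{kj})`, converges to `0` in probability. -/
theorem walks_length_two_lln
    {Ω : Type*} [MeasureSpace Ω] [IsProbabilityMeasure (ℙ : Measure Ω)]
    (A : (n : ℕ) → Fin n → Fin n → Ω → ℕ)
    (μ : (n : ℕ) → Fin n → Fin n → ℝ≥0) (C : ℝ≥0)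
    (hindep : ∀ n, iIndepFun
      (fun p : Fin n × Fin n => A n p.1 p.2) ℙ)
    (hdist : ∀ n (i j : Fin n), Measure.map (A n i j) ℙ = poissonMeasure (μ n i j))
    (hbound : ∀ n (i j : Fin n), μ n i j ≤ C) :
    ∀ ε > 0, Tendsto
      (fun n : ℕ => ℙ {ω | ε ≤
        |((n : ℝ) ^ 3)⁻¹ *
          ((∑ i : Fin n, ∑ j : Fin n, ∑ k : Fin n, (A n i k ω : ℝ) * (A n k j ω : ℝ))
            - ∑ i : Fin n, ∑ j : Fin n, ∑ k : Fin n, (μ n i k : ℝ) * (μ n k j : ℝ))|})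
      atTop (nhds 0) := by
  intro ε hε
  set K : ℝ := (C : ℝ) with hKdef
  have hK0 : (0:ℝ) ≤ K := C.coe_nonneg
  have key : ∀ n : ℕ, 1 ≤ n → ℙ {ω | ε ≤
        |((n : ℝ) ^ 3)⁻¹ *
          ((∑ i : Fin n, ∑ j : Fin n, ∑ k : Fin n, (A n i k ω : ℝ) * (A n k j ω : ℝ))
            - ∑ i : Fin n, ∑ j : Fin n, ∑ k : Fin n, (μ n i k : ℝ) * (μ n k j : ℝ))|}
      ≤ ENNReal.ofReal ((K^2 + 2*K + 1) / Real.sqrt n / ε) := by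
    intro n hn
    have hn1 : (1:ℝ) ≤ (n:ℝ) := by exact_mod_cast hn
    set t : ℝ := Real.sqrt (n:ℝ) with htdef
    have ht0 : 0 < t := Real.sqrt_pos.mpr (by linarith)
    set X : Fin n → Fin n → Ω → ℝ := fun i j ω => (A n i j ω : ℝ) with hXdef
    have hXmem : ∀ i j, MemLp (X i j) 2 ℙ := fun i j => pois_memLp _ _ (hdist n i j)
    have hXE : ∀ i j, ∫ ω, X i j ω ∂ℙ = (μ n i j : ℝ) := fun i j => pois_mean _ _ (hdist n i j)
    have hXvar : ∀ i j, variance (X i j) ℙ = (μ n i j : ℝ) :=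
      fun i j => pois_variance _ _ (hdist n i j)
    set R : Fin n → Ω → ℝ := fun k => ∑ i : Fin n, X i k with hRdef
    set L : Fin n → Ω → ℝ := fun k => ∑ j : Fin n, X k j with hLdef
    set rr : Fin n → ℝ := fun k => ∑ i : Fin n, (μ n i k : ℝ) with hrrdef
    set cc : Fin n → ℝ := fun k => ∑ j : Fin n, (μ n k j : ℝ) with hccdef
    have hRapp : ∀ k ω, R k ω = ∑ i : Fin n, X i k ω := by
      intro k ω; simp [hRdef, Finset.sum_apply]
    have hLapp : ∀ k ω, L k ω = ∑ j : Fin n, X k j ω := by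
      intro k ω; simp [hLdef, Finset.sum_apply]
    have hRmem : ∀ k, MemLp (R k) 2 ℙ := fun k => memLp_finsetSum' _ fun i _ => hXmem i k
    have hLmem : ∀ k, MemLp (L k) 2 ℙ := fun k => memLp_finsetSum' _ fun j _ => hXmem k j
    have hRE : ∀ k, ∫ ω, R k ω ∂ℙ = rr k := by
      intro k
      calc ∫ ω, R k ω ∂ℙ = ∫ ω, ∑ i : Fin n, X i k ω ∂ℙ := by simp_rw [hRapp]
        _ = ∑ i : Fin n, ∫ ω, X i k ω ∂ℙ :=
            integral_finset_sum _ fun i _ => (hXmem i k).integrable one_le_two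
        _ = rr k := Finset.sum_congr rfl fun i _ => hXE i k
    have hLE : ∀ k, ∫ ω, L k ω ∂ℙ = cc k := by
      intro k
      calc ∫ ω, L k ω ∂ℙ = ∫ ω, ∑ j : Fin n, X k j ω ∂ℙ := by simp_rw [hLapp]
        _ = ∑ j : Fin n, ∫ ω, X k j ω ∂ℙ :=
            integral_finset_sum _ fun j _ => (hXmem k j).integrable one_le_two
        _ = cc k := Finset.sum_congr rfl fun j _ => hXE k j
    have hRvar : ∀ k, variance (R k) ℙ = rr k := by
      intro k
      simp only [hRdef]
      rw [IndepFun.variance_sum (fun i _ => hXmem i k) ?_]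
      · exact Finset.sum_congr rfl fun i _ => hXvar i k
      · intro i _ j _ hij
        have hne : ((i,k) : Fin n × Fin n) ≠ (j,k) := by simp [Prod.ext_iff, hij]
        exact ((hindep n).indepFun hne).comp measurable_from_top measurable_from_top
    have hLvar : ∀ k, variance (L k) ℙ = cc k := by
      intro k
      simp only [hLdef]
      rw [IndepFun.variance_sum (fun j _ => hXmem k j) ?_]
      · exact Finset.sum_congr rfl fun j _ => hXvar k j
      · intro i _ j _ hij
        have hne : ((k,i) : Fin n × Fin n) ≠ (k,j) := by simp [Prod.ext_iff, hij]
        exact ((hindep n).indepFun hne).comp measurable_from_top measurable_from_top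
    have hμK : ∀ i j, (μ n i j : ℝ) ≤ K := fun i j => by
      rw [hKdef]; exact_mod_cast hbound n i j
    have hrr0 : ∀ k, 0 ≤ rr k := fun k => Finset.sum_nonneg fun i _ => (μ n i k).coe_nonneg
    have hcc0 : ∀ k, 0 ≤ cc k := fun k => Finset.sum_nonneg fun j _ => (μ n k j).coe_nonneg
    have hrrK : ∀ k, rr k ≤ K * n := by
      intro k
      calc rr k ≤ ∑ _i : Fin n, K := Finset.sum_le_sum fun i _ => hμK i k
        _ = K * n := by
            simp [Finset.sum_const, Finset.card_univ, nsmul_eq_mul, mul_comm]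
    have hccK : ∀ k, cc k ≤ K * n := by
      intro k
      calc cc k ≤ ∑ _j : Fin n, K := Finset.sum_le_sum fun j _ => hμK k j
        _ = K * n := by
            simp [Finset.sum_const, Finset.card_univ, nsmul_eq_mul, mul_comm]
    have hRcent : ∀ k, ∫ ω, (R k ω - rr k)^2 ∂ℙ = rr k := by
      intro k
      have h1 := variance_eq_integral (hRmem k).aemeasurable
      rw [hRE k] at h1
      rw [← h1, hRvar k]
    have hLcent : ∀ k, ∫ ω, (L k ω - cc k)^2 ∂ℙ = cc k := by
      intro k
      have h1 := variance_eq_integral (hLmem k).aemeasurable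
      rw [hLE k] at h1
      rw [← h1, hLvar k]
    have hL2 : ∀ k, ∫ ω, (L k ω)^2 ∂ℙ = cc k + (cc k)^2 := by
      intro k
      have h1 := variance_eq_sub (hLmem k)
      simp only [Pi.pow_apply] at h1
      rw [hLvar k, hLE k] at h1
      linarith [h1]
    have hRcint : ∀ k, Integrable (fun ω => (R k ω - rr k)^2) ℙ := by
      intro k
      have := ((hRmem k).sub (memLp_const (rr k))).integrable_sq
      simpa using this
    have hLcint : ∀ k, Integrable (fun ω => (L k ω - cc k)^2) ℙ := by
      intro k
      have := ((hLmem k).sub (memLp_const (cc k))).integrable_sq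
      simpa using this
    have hL2int : ∀ k, Integrable (fun ω => (L k ω)^2) ℙ := fun k => (hLmem k).integrable_sq
    set G : Fin n → Ω → ℝ := fun k ω => (t*(R k ω - rr k)^2 + (L k ω)^2/t)/2
        + rr k * ((L k ω - cc k)^2/t + t)/2 with hGdef
    have hGint : ∀ k, Integrable (G k) ℙ := by
      intro k
      apply Integrable.add
      · exact (((hRcint k).const_mul t).add ((hL2int k).div_const t)).div_const 2
      · exact ((((hLcint k).div_const t).add (integrable_const t)).const_mul (rr k)).div_const 2
    set Pb : ℝ := (t*(K*n) + ((K*n) + (K*n)^2)/t)/2 + (K*n)*((K*n)/t + t)/2 with hPbdef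
    have hEG : ∀ k, ∫ ω, G k ω ∂ℙ ≤ Pb := by
      intro k
      have i1 : ∫ ω, (t*(R k ω - rr k)^2 + (L k ω)^2/t)/2 ∂ℙ
          = (t * rr k + (cc k + (cc k)^2)/t)/2 := by
        rw [integral_div, integral_add ((hRcint k).const_mul t) ((hL2int k).div_const t),
          integral_const_mul, integral_div, hRcent k, hL2 k]
      have i2 : ∫ ω, rr k * ((L k ω - cc k)^2/t + t)/2 ∂ℙ = rr k * (cc k/t + t)/2 := by
        rw [integral_div, integral_const_mul,
          integral_add ((hLcint k).div_const t) (integrable_const t),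
          integral_div, hLcent k, integral_const]
        simp [measure_univ]
      have e1 : ∫ ω, G k ω ∂ℙ = (t * rr k + (cc k + (cc k)^2)/t)/2 + rr k * (cc k/t + t)/2 := by
        have I1 : Integrable (fun ω => (t*(R k ω - rr k)^2 + (L k ω)^2/t)/2) ℙ :=
          (((hRcint k).const_mul t).add ((hL2int k).div_const t)).div_const 2
        have I2 : Integrable (fun ω => rr k * ((L k ω - cc k)^2/t + t)/2) ℙ :=
          ((((hLcint k).div_const t).add (integrable_const t)).const_mul (rr k)).div_const 2
        simp only [hGdef]
        rw [integral_add I1 I2, i1, i2]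
      rw [e1, hPbdef]
      have h1 := hrrK k
      have h2 := hccK k
      have h3 := hrr0 k
      have h4 := hcc0 k
      have hKn0 : 0 ≤ K * n := by positivity
      gcongr <;> nlinarith
    have hsum_mu : (∑ i : Fin n, ∑ j : Fin n, ∑ k : Fin n, (μ n i k : ℝ) * (μ n k j : ℝ))
        = ∑ k : Fin n, rr k * cc k := by
      rw [sum3_swap]
    have hsum_A : ∀ ω, (∑ i : Fin n, ∑ j : Fin n, ∑ k : Fin n, (A n i k ω : ℝ) * (A n k j ω : ℝ))
        = ∑ k : Fin n, R k ω * L k ω := by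
      intro ω
      rw [sum3_swap]
      exact Finset.sum_congr rfl fun k _ => by rw [hRapp, hLapp]
    have habs : ∀ ω, |(∑ k : Fin n, R k ω * L k ω) - ∑ k : Fin n, rr k * cc k|
        ≤ ∑ k : Fin n, G k ω := by
      intro ω
      rw [← Finset.sum_sub_distrib]
      refine (Finset.abs_sum_le_sum_abs _ _).trans (Finset.sum_le_sum fun k _ => ?_)
      exact abs_mul_le_quad t (rr k) (cc k) (R k ω) (L k ω) ht0 (hrr0 k)
    have hRLint : ∀ k, Integrable (fun ω => R k ω * L k ω) ℙ := by
      intro k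
      refine Integrable.mono'
        ((((hRmem k).integrable_sq).add ((hLmem k).integrable_sq)).div_const 2)
        ((hRmem k).aestronglyMeasurable.mul (hLmem k).aestronglyMeasurable)
        (Filter.Eventually.of_forall fun ω => ?_)
      rw [Real.norm_eq_abs, abs_mul]
      simpa using abs_mul_le' 1 (R k ω) (L k ω) one_pos
    have hSint : Integrable (fun ω => ∑ k : Fin n, R k ω * L k ω) ℙ :=
      integrable_finset_sum _ fun k _ => hRLint k
    have hInt1 : ∫ ω, |(∑ k : Fin n, R k ω * L k ω) - ∑ k : Fin n, rr k * cc k| ∂ℙ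
        ≤ (n:ℝ) * Pb := by
      have h1 : ∫ ω, |(∑ k : Fin n, R k ω * L k ω) - ∑ k : Fin n, rr k * cc k| ∂ℙ
          ≤ ∫ ω, ∑ k : Fin n, G k ω ∂ℙ :=
        integral_mono_of_nonneg (Filter.Eventually.of_forall fun ω => abs_nonneg _)
          (integrable_finset_sum _ fun k _ => hGint k) (Filter.Eventually.of_forall habs)
      have h2 : ∫ ω, ∑ k : Fin n, G k ω ∂ℙ = ∑ k : Fin n, ∫ ω, G k ω ∂ℙ :=
        integral_finset_sum _ fun k _ => hGint k
      have h3 : (∑ k : Fin n, ∫ ω, G k ω ∂ℙ) ≤ (n:ℝ) * Pb := by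
        calc (∑ k : Fin n, ∫ ω, G k ω ∂ℙ) ≤ ∑ _k : Fin n, Pb :=
              Finset.sum_le_sum fun k _ => hEG k
          _ = (n:ℝ) * Pb := by
              simp [Finset.sum_const, Finset.card_univ, nsmul_eq_mul]
      exact h1.trans (h2 ▸ h3)
    have hZint : Integrable
        (fun ω => |((n:ℝ)^3)⁻¹ * ((∑ k : Fin n, R k ω * L k ω) - ∑ k : Fin n, rr k * cc k)|) ℙ :=
      ((hSint.sub (integrable_const _)).const_mul _).abs
    have markov := mul_meas_ge_le_integral_of_nonneg
      (Filter.Eventually.of_forall fun ω => abs_nonneg _) hZint ε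
    have hEZ : ∫ ω, |((n:ℝ)^3)⁻¹ * ((∑ k : Fin n, R k ω * L k ω) - ∑ k : Fin n, rr k * cc k)| ∂ℙ
        ≤ (K^2 + 2*K + 1)/t := by
      have e : ∀ ω : Ω, |((n:ℝ)^3)⁻¹ * ((∑ k : Fin n, R k ω * L k ω) - ∑ k : Fin n, rr k * cc k)|
          = ((n:ℝ)^3)⁻¹ * |(∑ k : Fin n, R k ω * L k ω) - ∑ k : Fin n, rr k * cc k| := by
        intro ω
        rw [abs_mul, abs_of_nonneg (by positivity : (0:ℝ) ≤ ((n:ℝ)^3)⁻¹)]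
      calc ∫ ω, |((n:ℝ)^3)⁻¹ * ((∑ k : Fin n, R k ω * L k ω) - ∑ k : Fin n, rr k * cc k)| ∂ℙ
          = ((n:ℝ)^3)⁻¹
            * ∫ ω, |(∑ k : Fin n, R k ω * L k ω) - ∑ k : Fin n, rr k * cc k| ∂ℙ := by
            simp_rw [e]
            exact integral_const_mul _ _
        _ ≤ ((n:ℝ)^3)⁻¹ * ((n:ℝ) * Pb) := by
            exact mul_le_mul_of_nonneg_left hInt1 (by positivity)
        _ ≤ (K^2 + 2*K + 1)/t := by
            rw [hPbdef, htdef]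
            exact walks_arith K (n:ℝ) hK0 hn1
    have hPle : (ℙ {ω : Ω | ε ≤
        |((n:ℝ)^3)⁻¹ * ((∑ k : Fin n, R k ω * L k ω) - ∑ k : Fin n, rr k * cc k)|}).toReal
        ≤ (K^2 + 2*K + 1)/t/ε := by
      have h := markov.trans hEZ
      rw [le_div_iff₀ hε]
      rw [measureReal_def] at h
      linarith [h]
    have hset : {ω : Ω | ε ≤
        |((n : ℝ) ^ 3)⁻¹ *
          ((∑ i : Fin n, ∑ j : Fin n, ∑ k : Fin n, (A n i k ω : ℝ) * (A n k j ω : ℝ))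
            - ∑ i : Fin n, ∑ j : Fin n, ∑ k : Fin n, (μ n i k : ℝ) * (μ n k j : ℝ))|}
        = {ω : Ω | ε ≤
        |((n:ℝ)^3)⁻¹ * ((∑ k : Fin n, R k ω * L k ω) - ∑ k : Fin n, rr k * cc k)|} := by
      ext ω
      simp only [Set.mem_setOf_eq, hsum_A ω, hsum_mu]
    rw [hset, htdef] at *
    rw [← ENNReal.ofReal_toReal (measure_ne_top ℙ _)]
    exact ENNReal.ofReal_le_ofReal hPle
  have hreal : Tendsto (fun n : ℕ => (K^2 + 2*K + 1) / Real.sqrt n / ε) atTop (nhds 0) := by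
    have h1 : Tendsto (fun n : ℕ => Real.sqrt n) atTop atTop :=
      sqrt_tendsto_atTop'.comp tendsto_natCast_atTop_atTop
    have h2 := Tendsto.div_atTop (tendsto_const_nhds (x := (K^2 + 2*K + 1))) h1
    simpa using h2.div_const ε
  have hofReal : Tendsto (fun n : ℕ => ENNReal.ofReal ((K^2 + 2*K + 1) / Real.sqrt n / ε))
      atTop (nhds 0) := by
    have := ENNReal.tendsto_ofReal hreal
    simpa using this
  refine tendsto_of_tendsto_of_tendsto_of_le_of_le' tendsto_const_nhds hofReal
    (Filter.Eventually.of_forall fun n => zero_le) ?_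
  filter_upwards [eventually_ge_atTop 1] with n hn using key n hn
end

section
/- For each n ∈ ℕ, let N_n = {1,…,n} with group assignment g_n : N_n → G (G a fixed finite set of groups), and let (Â^{(n)}_{ij})_{i,j≤n} be mutually independent Poisson random variables with means μ^{(n)}_{ij} ≤ C for a constant C independent of n. Suppose lim inf_n n^{-3}·Σ_k d^i_k d^o_k > 0, and suppose there exists δ > 0 such that Σ_{r∈G} a^{(2)}_r b^{(2)}_r ≤ 1 − δ for all n. Then the sampled assortativity on paths of length 2 satisfies r̂^{(2)} − r^{(2)} → 0 in probability as n → ∞. -/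
open MeasureTheory ProbabilityTheory Filter
open scoped ProbabilityTheory NNReal ENNReal Topology
set_option linter.unusedSectionVars false
set_option linter.unusedVariables false
set_option maxHeartbeats 2000000

lemma pow4_le_two_pow (k : ℕ) : (k : ℝ)^4 ≤ 24 * 2^k := by
  induction k with
  | zero => norm_num
  | succ m ih =>
    rcases le_or_gt m 5 with h | h
    · interval_cases m <;> norm_num
    · have hm : (6:ℝ) ≤ (m:ℝ) := by exact_mod_cast h
      have h2' : (6:ℝ)*(m:ℝ) ≤ (m:ℝ)^2 := by nlinarith
      have h3' : (6:ℝ)*(m:ℝ)^2 ≤ (m:ℝ)^3 := by nlinarith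
      have h4' : (6:ℝ)*(m:ℝ)^3 ≤ (m:ℝ)^4 := by nlinarith
      have h1 : ((m+1 : ℕ) : ℝ)^4 ≤ 2 * (m:ℝ)^4 := by push_cast; nlinarith
      calc ((m+1:ℕ):ℝ)^4 ≤ 2 * (m:ℝ)^4 := h1
        _ ≤ 2 * (24 * 2^m) := by nlinarith
        _ = 24 * 2^(m+1) := by ring

lemma real_le_pow4_add_one (x : ℝ) : x ≤ x^4 + 1 := by
  nlinarith [sq_nonneg (x^2-1), sq_nonneg x, sq_nonneg (x-1), sq_nonneg (x+1)]

lemma sq_le_pow4_add_one (x : ℝ) : x^2 ≤ x^4 + 1 := by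
  nlinarith [sq_nonneg (x^2-1)]

section Poisson
variable {Ω : Type*} [MeasureSpace Ω] [IsProbabilityMeasure (ℙ : Measure Ω)]
  {X : Ω → ℕ} {r : ℝ≥0}

lemma poissonMeasure_singleton (r : ℝ≥0) (k : ℕ) :
    poissonMeasure r {k} = ENNReal.ofReal (poissonPMFReal r k) := by
  rw [ProbabilityTheory.poissonMeasure_singleton]
  rfl

lemma hasSum_poisson_mul_two_pow (r : ℝ≥0) :
    HasSum (fun k : ℕ => 24 * 2^k * poissonPMFReal r k) (24 * Real.exp r) := by
  have h : HasSum (fun k : ℕ => ((2 * (r:ℝ))^k / k.factorial)) (Real.exp (2*r)) := by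
    rw [Real.exp_eq_exp_ℝ]
    exact NormedSpace.expSeries_div_hasSum_exp (2*(r:ℝ))
  have h2 := h.mul_left (24 * Real.exp (-(r:ℝ)))
  have heq : (fun k : ℕ => 24 * Real.exp (-(r:ℝ)) * ((2 * (r:ℝ))^k / k.factorial))
      = fun k : ℕ => 24 * 2^k * poissonPMFReal r k := by
    funext k
    rw [poissonPMFReal, mul_pow]
    ring
  rw [heq] at h2
  have : 24 * Real.exp (-(r:ℝ)) * Real.exp (2*(r:ℝ)) = 24 * Real.exp r := by
    rw [mul_assoc, ← Real.exp_add]; ring_nf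
  rwa [this] at h2

lemma lintegral_pow4_le (hm : AEMeasurable X ℙ) (hd : Measure.map X ℙ = poissonMeasure r) :
    ∫⁻ ω, ((X ω : ℝ≥0∞))^4 ∂ℙ ≤ ENNReal.ofReal (24 * Real.exp r) := by
  have hf : Measurable (fun k : ℕ => ((k : ℝ≥0∞))^4) := by measurability
  have h1 : ∫⁻ ω, ((X ω : ℝ≥0∞))^4 ∂ℙ = ∫⁻ k, ((k:ℝ≥0∞))^4 ∂(Measure.map X ℙ) :=
    (lintegral_map' hf.aemeasurable hm).symm
  rw [h1, hd, lintegral_countable']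
  have hterm : ∀ k : ℕ, ((k:ℝ≥0∞))^4 * poissonMeasure r {k}
      ≤ ENNReal.ofReal (24 * 2^k * poissonPMFReal r k) := by
    intro k
    rw [_root_.poissonMeasure_singleton]
    have h4 : ((k:ℝ≥0∞))^4 = ENNReal.ofReal ((k:ℝ)^4) := by
      rw [ENNReal.ofReal_pow (by positivity), ENNReal.ofReal_natCast]
    rw [h4, ← ENNReal.ofReal_mul (by positivity)]
    apply ENNReal.ofReal_le_ofReal
    have := poissonPMFReal_nonneg (r := r) (n := k)
    have := pow4_le_two_pow k
    nlinarith
  calc ∑' k : ℕ, ((k:ℝ≥0∞))^4 * poissonMeasure r {k}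
      ≤ ∑' k : ℕ, ENNReal.ofReal (24 * 2^k * poissonPMFReal r k) :=
        ENNReal.tsum_le_tsum hterm
    _ = ENNReal.ofReal (24 * Real.exp r) := by
        rw [← (hasSum_poisson_mul_two_pow r).tsum_eq]
        rw [← ENNReal.ofReal_tsum_of_nonneg
          (fun k => mul_nonneg (by positivity) poissonPMFReal_nonneg)
          (hasSum_poisson_mul_two_pow r).summable]

lemma integrable_pow4 (hm : AEMeasurable X ℙ) (hd : Measure.map X ℙ = poissonMeasure r) :
    Integrable (fun ω => ((X ω : ℝ))^4) ℙ := by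
  have hsm : AEStronglyMeasurable (fun ω => ((X ω : ℝ))^4) ℙ := by
    have hmeas : Measurable (fun k : ℕ => ((k:ℝ))^4) := by measurability
    exact (hmeas.comp_aemeasurable hm).aestronglyMeasurable
  refine ⟨hsm, ?_⟩
  show (∫⁻ ω, (‖((X ω : ℝ))^4‖₊ : ℝ≥0∞) ∂ℙ) < ⊤
  have heq : ∀ ω, (‖((X ω : ℝ))^4‖₊ : ℝ≥0∞) = ((X ω : ℝ≥0∞))^4 := by
    intro ω
    rw [← enorm_eq_nnnorm, ← ofReal_norm, Real.norm_of_nonneg (by positivity),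
      ENNReal.ofReal_pow (by positivity), ENNReal.ofReal_natCast]
  calc ∫⁻ ω, (‖((X ω : ℝ))^4‖₊ : ℝ≥0∞) ∂ℙ = ∫⁻ ω, ((X ω : ℝ≥0∞))^4 ∂ℙ := by
        simp_rw [heq]
    _ ≤ ENNReal.ofReal (24 * Real.exp r) := lintegral_pow4_le hm hd
    _ < ⊤ := ENNReal.ofReal_lt_top

lemma integral_pow4_le (hm : AEMeasurable X ℙ) (hd : Measure.map X ℙ = poissonMeasure r) :
    ∫ ω, ((X ω : ℝ))^4 ∂ℙ ≤ 24 * Real.exp r := by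
  have hsm := (integrable_pow4 hm hd).1
  rw [integral_eq_lintegral_of_nonneg_ae (Filter.Eventually.of_forall (fun ω => by positivity)) hsm]
  apply ENNReal.toReal_le_of_le_ofReal (by positivity)
  calc ∫⁻ ω, ENNReal.ofReal ((X ω : ℝ)^4) ∂ℙ = ∫⁻ ω, ((X ω : ℝ≥0∞))^4 ∂ℙ := by
        congr 1; funext ω
        rw [ENNReal.ofReal_pow (by positivity), ENNReal.ofReal_natCast]
    _ ≤ _ := lintegral_pow4_le hm hd

end Poisson

section Poisson2
variable {Ω : Type*} [MeasureSpace Ω] [IsProbabilityMeasure (ℙ : Measure Ω)]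
  {X : Ω → ℕ} {r : ℝ≥0}

lemma aesm_cast_pow (hm : AEMeasurable X ℙ) (p : ℕ) :
    AEStronglyMeasurable (fun ω => ((X ω : ℝ))^p) ℙ := by
  have hmeas : Measurable (fun k : ℕ => ((k:ℝ))^p) := by measurability
  exact (hmeas.comp_aemeasurable hm).aestronglyMeasurable

lemma integrable_cast (hm : AEMeasurable X ℙ) (hd : Measure.map X ℙ = poissonMeasure r) :
    Integrable (fun ω => ((X ω : ℝ))) ℙ := by
  refine Integrable.mono' ((integrable_pow4 hm hd).add (integrable_const 1))
    (by simpa using aesm_cast_pow hm 1) ?_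
  filter_upwards with ω
  rw [Real.norm_of_nonneg (by positivity)]
  exact real_le_pow4_add_one _

lemma integrable_sq (hm : AEMeasurable X ℙ) (hd : Measure.map X ℙ = poissonMeasure r) :
    Integrable (fun ω => ((X ω : ℝ))^2) ℙ := by
  refine Integrable.mono' ((integrable_pow4 hm hd).add (integrable_const 1))
    (aesm_cast_pow hm 2) ?_
  filter_upwards with ω
  rw [Real.norm_of_nonneg (by positivity)]
  exact sq_le_pow4_add_one _

lemma integral_sq_le (hm : AEMeasurable X ℙ) (hd : Measure.map X ℙ = poissonMeasure r) :
    ∫ ω, ((X ω : ℝ))^2 ∂ℙ ≤ 24 * Real.exp r + 1 := by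
  calc ∫ ω, ((X ω : ℝ))^2 ∂ℙ ≤ ∫ ω, (((X ω : ℝ))^4 + 1) ∂ℙ :=
        integral_mono (integrable_sq hm hd) ((integrable_pow4 hm hd).add (integrable_const 1))
          (fun ω => sq_le_pow4_add_one _)
    _ = (∫ ω, ((X ω : ℝ))^4 ∂ℙ) + 1 := by
        rw [integral_add (integrable_pow4 hm hd) (integrable_const 1), integral_const]
        simp
    _ ≤ 24 * Real.exp r + 1 := by linarith [integral_pow4_le hm hd]

lemma integral_cast_eq (hm : AEMeasurable X ℙ) (hd : Measure.map X ℙ = poissonMeasure r) :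
    ∫ ω, ((X ω : ℝ)) ∂ℙ = r := by
  have hint : Integrable (fun k : ℕ => (k:ℝ)) (Measure.map X ℙ) := by
    rw [integrable_map_measure (Measurable.aestronglyMeasurable (by measurability)) hm]
    exact integrable_cast hm hd
  have h1 : ∫ ω, ((X ω : ℝ)) ∂ℙ = ∫ k, (k:ℝ) ∂(Measure.map X ℙ) :=
    (integral_map hm (Measurable.aestronglyMeasurable (by measurability))).symm
  rw [h1, integral_countable' hint]
  have hsingle : ∀ k : ℕ, ((Measure.map X ℙ) {k}).toReal = poissonPMFReal r k := by
    intro k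
    rw [hd, ProbabilityTheory.poissonMeasure_singleton]
    show (ENNReal.ofReal (poissonPMFReal r k)).toReal = _
    rw [ENNReal.toReal_ofReal poissonPMFReal_nonneg]
  have hs : HasSum (fun k : ℕ => ((Measure.map X ℙ) {k}).toReal • (k:ℝ)) (r:ℝ) := by
    simp_rw [hsingle, smul_eq_mul]
    have hps := (poissonPMFRealSum r).mul_left (r:ℝ)
    have : HasSum (fun k : ℕ => poissonPMFReal r (k+1) * ((k+1:ℕ):ℝ)) (r:ℝ) := by
      have heq : (fun k : ℕ => poissonPMFReal r (k+1) * ((k+1:ℕ):ℝ))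
          = fun k : ℕ => (r:ℝ) * poissonPMFReal r k := by
        funext k
        rw [poissonPMFReal, poissonPMFReal, Nat.factorial_succ]
        have hk : ((k+1:ℕ):ℝ) ≠ 0 := by positivity
        push_cast
        field_simp
        ring
      rw [heq]; simpa [poissonPMFReal] using hps
    have h0 : HasSum (fun k : ℕ => poissonPMFReal r k * (k:ℝ)) (r:ℝ) := by
      refine (hasSum_nat_add_iff' 1).1 ?_
      simpa using this
    exact h0
  exact hs.tsum_eq

end Poisson2

noncomputable def Mc (C : ℝ≥0) : ℝ := 24 * Real.exp C
lemma Mc_pos (C : ℝ≥0) : 0 < Mc C := by rw [Mc]; positivity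
lemma four_mul_le_aux (a b c d : ℝ) (ha : 0 ≤ a) (hb : 0 ≤ b) (hc : 0 ≤ c) (hd : 0 ≤ d) :
    a * b * (c * d) ≤ (a^4 + b^4 + c^4 + d^4)/4 := by
  nlinarith [sq_nonneg (a*b - c*d), sq_nonneg (a^2 - b^2), sq_nonneg (c^2 - d^2)]
lemma two_mul_le_aux (a b : ℝ) : a * b ≤ (a^2 + b^2)/2 := by nlinarith [sq_nonneg (a-b)]

section Core
variable {Ω : Type*} [MeasureSpace Ω] [IsProbabilityMeasure (ℙ : Measure Ω)] {n : ℕ}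
  {X : Fin n × Fin n → Ω → ℕ} {lam : Fin n × Fin n → ℝ≥0} {C : ℝ≥0}

def Yf (X : Fin n × Fin n → Ω → ℕ) (a b : Fin n × Fin n) : Ω → ℝ :=
  fun ω => (X a ω : ℝ) * (X b ω : ℝ)

lemma Yf_nonneg (a b : Fin n × Fin n) (ω : Ω) : 0 ≤ Yf X a b ω :=
  mul_nonneg (Nat.cast_nonneg _) (Nat.cast_nonneg _)

lemma intY_nonneg (a b : Fin n × Fin n) : 0 ≤ ∫ ω, Yf X a b ω ∂ℙ :=
  integral_nonneg (fun ω => Yf_nonneg a b ω)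

/-- first edge of a triple (i,j,k) ↦ (i,k) -/
def E1 {n : ℕ} (t : Fin n × Fin n × Fin n) : Fin n × Fin n := (t.1, t.2.2)
/-- second edge of a triple (i,j,k) ↦ (k,j) -/
def E2 {n : ℕ} (t : Fin n × Fin n × Fin n) : Fin n × Fin n := (t.2.2, t.2.1)

/-- summand -/
def ftf (X : Fin n × Fin n → Ω → ℕ) (w : Fin n → Fin n → ℝ)
    (t : Fin n × Fin n × Fin n) : Ω → ℝ :=
  fun ω => w t.1 t.2.1 * Yf X (E1 t) (E2 t) ω

/-- the path-count statistic -/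
def Sf (X : Fin n × Fin n → Ω → ℕ) (w : Fin n → Fin n → ℝ) : Ω → ℝ :=
  fun ω => ∑ t : Fin n × Fin n × Fin n, ftf X w t ω

/-- overlap indicator -/
def chi {n : ℕ} (t u : Fin n × Fin n × Fin n) : ℝ :=
  (if E1 u = E1 t then (1:ℝ) else 0) + (if E1 u = E2 t then 1 else 0)
    + (if E2 u = E1 t then 1 else 0) + (if E2 u = E2 t then 1 else 0)

lemma chi_nonneg (t u : Fin n × Fin n × Fin n) : 0 ≤ chi t u := by
  rw [chi]; positivity

-- counting lemma
lemma count_edge (c : Fin n × Fin n) :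
    ∑ u : Fin n × Fin n × Fin n, (if E1 u = c then (1:ℝ) else 0) = n := by
  rw [Fintype.sum_prod_type]
  have h1 : ∀ x : Fin n, ∑ u2 : Fin n × Fin n, (if E1 (x, u2) = c then (1:ℝ) else 0)
      = if x = c.1 then (n:ℝ) else 0 := by
    intro x
    rw [Fintype.sum_prod_type]
    have h2 : ∀ y z : Fin n, (if E1 (x, y, z) = c then (1:ℝ) else 0)
        = (if x = c.1 then (1:ℝ) else 0) * (if z = c.2 then 1 else 0) := by
      intro y z
      by_cases hx : x = c.1 <;> by_cases hz : z = c.2 <;>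
        simp [E1, Prod.ext_iff, hx, hz]
    simp_rw [h2]
    rw [← Finset.sum_mul_sum]
    simp [Finset.sum_ite_eq' Finset.univ c.2 (fun _ => (1:ℝ))]
  simp_rw [h1]
  simp [Finset.sum_ite_eq' Finset.univ c.1 (fun _ => (n:ℝ))]

lemma count_edge2 (c : Fin n × Fin n) :
    ∑ u : Fin n × Fin n × Fin n, (if E2 u = c then (1:ℝ) else 0) = n := by
  rw [Fintype.sum_prod_type]
  have h1 : ∀ x : Fin n, ∑ u2 : Fin n × Fin n, (if E2 (x, u2) = c then (1:ℝ) else 0)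
      = (1:ℝ) := by
    intro x
    rw [Fintype.sum_prod_type]
    have h2 : ∀ y z : Fin n, (if E2 (x, y, z) = c then (1:ℝ) else 0)
        = (if y = c.2 then (1:ℝ) else 0) * (if z = c.1 then 1 else 0) := by
      intro y z
      by_cases hz : z = c.1 <;> by_cases hy : y = c.2 <;>
        simp [E2, Prod.ext_iff, hz, hy]
    simp_rw [h2]
    rw [← Finset.sum_mul_sum]
    simp [Finset.sum_ite_eq' Finset.univ c.1 (fun _ => (1:ℝ)),
      Finset.sum_ite_eq' Finset.univ c.2 (fun _ => (1:ℝ))]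
  simp_rw [h1]
  simp

lemma sum_chi (t : Fin n × Fin n × Fin n) :
    ∑ u : Fin n × Fin n × Fin n, chi t u = 4 * n := by
  simp_rw [chi]
  rw [Finset.sum_add_distrib, Finset.sum_add_distrib, Finset.sum_add_distrib,
    count_edge (E1 t), count_edge (E2 t), count_edge2 (E1 t), count_edge2 (E2 t)]
  ring

lemma count_diag :
    ∑ t : Fin n × Fin n × Fin n, (if E1 t = E2 t then (1:ℝ) else 0) = n := by
  rw [Fintype.sum_prod_type]
  have h1 : ∀ x : Fin n, ∑ u2 : Fin n × Fin n, (if E1 (x, u2) = E2 (x, u2) then (1:ℝ) else 0)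
      = 1 := by
    intro x
    rw [Fintype.sum_prod_type]
    have h2 : ∀ y z : Fin n, (if E1 (x, y, z) = E2 (x, y, z) then (1:ℝ) else 0)
        = (if z = x then (1:ℝ) else 0) * (if y = z then 1 else 0) := by
      intro y z
      by_cases hz : z = x <;> by_cases hy : y = z <;>
        simp_all [E1, E2, Prod.ext_iff] <;> tauto
    simp_rw [h2]
    have h3 : ∀ y : Fin n, ∑ z : Fin n, (if z = x then (1:ℝ) else 0) * (if y = z then 1 else 0)
        = if y = x then 1 else 0 := by
      intro y
      rw [Finset.sum_eq_single x]
      · by_cases hy : y = x <;> simp [hy]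
      · intro z _ hz; simp [hz]
      · intro h; exact absurd (Finset.mem_univ x) h
    simp_rw [h3]
    rw [Finset.sum_ite_eq' Finset.univ x (fun _ => (1:ℝ))]
    simp
  simp_rw [h1]
  simp



variable (hmeas : ∀ e, Measurable (X e))
  (hindep : iIndepFun X ℙ)
  (hd : ∀ e, Measure.map (X e) ℙ = poissonMeasure (lam e))
  (hb : ∀ e, lam e ≤ C)

include hmeas hd

lemma exp4_le (e : Fin n × Fin n) (hb : ∀ e, lam e ≤ C) :
    ∫ ω, ((X e ω : ℝ))^4 ∂ℙ ≤ Mc C := by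
  refine le_trans (integral_pow4_le (hmeas e).aemeasurable (hd e)) ?_
  have : Real.exp (lam e) ≤ Real.exp C := Real.exp_le_exp.2 (by exact_mod_cast hb e)
  rw [Mc]; linarith

lemma exp2_le (e : Fin n × Fin n) (hb : ∀ e, lam e ≤ C) :
    ∫ ω, ((X e ω : ℝ))^2 ∂ℙ ≤ Mc C + 1 := by
  refine le_trans (integral_sq_le (hmeas e).aemeasurable (hd e)) ?_
  have : Real.exp (lam e) ≤ Real.exp C := Real.exp_le_exp.2 (by exact_mod_cast hb e)
  rw [Mc]; linarith

omit hd in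
lemma measY (a b : Fin n × Fin n) : Measurable (Yf X a b) := by
  have h1 : Measurable (fun ω => ((X a ω : ℝ))) :=
    (measurable_from_top (f := fun k : ℕ => (k:ℝ))).comp (hmeas a)
  have h2 : Measurable (fun ω => ((X b ω : ℝ))) :=
    (measurable_from_top (f := fun k : ℕ => (k:ℝ))).comp (hmeas b)
  exact h1.mul h2

lemma intY (a b : Fin n × Fin n) : Integrable (Yf X a b) ℙ := by
  have hgint : Integrable (fun ω => (((X a ω : ℝ))^2 + ((X b ω : ℝ))^2)/2) ℙ :=
    ((integrable_sq (hmeas a).aemeasurable (hd a)).add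
      (integrable_sq (hmeas b).aemeasurable (hd b))).div_const 2
  refine Integrable.mono' hgint (measY hmeas a b).aestronglyMeasurable ?_
  filter_upwards with ω
  rw [Real.norm_of_nonneg (Yf_nonneg a b ω)]
  exact two_mul_le_aux _ _

lemma intY_le (a b : Fin n × Fin n) (hb : ∀ e, lam e ≤ C) :
    ∫ ω, Yf X a b ω ∂ℙ ≤ Mc C + 1 := by
  have hgint : Integrable (fun ω => (((X a ω : ℝ))^2 + ((X b ω : ℝ))^2)/2) ℙ :=
    ((integrable_sq (hmeas a).aemeasurable (hd a)).add
      (integrable_sq (hmeas b).aemeasurable (hd b))).div_const 2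
  have hmono := integral_mono (intY hmeas hd a b) hgint
    (fun ω => two_mul_le_aux ((X a ω : ℝ)) ((X b ω : ℝ)))
  have h2 : ∫ ω, (((X a ω : ℝ))^2 + ((X b ω : ℝ))^2)/2 ∂ℙ ≤ Mc C + 1 := by
    rw [integral_div, integral_add (integrable_sq (hmeas a).aemeasurable (hd a))
      (integrable_sq (hmeas b).aemeasurable (hd b))]
    have := exp2_le hmeas hd (C := C) a hb
    have := exp2_le hmeas hd (C := C) b hb
    linarith
  exact le_trans hmono h2

omit hmeas hd in
lemma YY_le (a b c d : Fin n × Fin n) (ω : Ω) :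
    Yf X a b ω * Yf X c d ω
      ≤ (((X a ω : ℝ))^4 + ((X b ω : ℝ))^4 + (((X c ω : ℝ))^4 + ((X d ω : ℝ))^4))/4 := by
  have h := four_mul_le_aux ((X a ω : ℝ)) ((X b ω : ℝ)) ((X c ω : ℝ)) ((X d ω : ℝ))
    (Nat.cast_nonneg _) (Nat.cast_nonneg _) (Nat.cast_nonneg _) (Nat.cast_nonneg _)
  calc Yf X a b ω * Yf X c d ω
      ≤ (((X a ω : ℝ))^4 + ((X b ω : ℝ))^4 + ((X c ω : ℝ))^4 + ((X d ω : ℝ))^4)/4 := h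
    _ = _ := by ring

lemma intYY (a b c d : Fin n × Fin n) :
    Integrable (fun ω => Yf X a b ω * Yf X c d ω) ℙ := by
  have hgint : Integrable (fun ω =>
      (((X a ω : ℝ))^4 + ((X b ω : ℝ))^4 + (((X c ω : ℝ))^4 + ((X d ω : ℝ))^4))/4) ℙ :=
    (((integrable_pow4 (hmeas a).aemeasurable (hd a)).add
        (integrable_pow4 (hmeas b).aemeasurable (hd b))).add
      ((integrable_pow4 (hmeas c).aemeasurable (hd c)).add
        (integrable_pow4 (hmeas d).aemeasurable (hd d)))).div_const 4
  refine Integrable.mono' hgint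
    ((measY hmeas a b).mul (measY hmeas c d)).aestronglyMeasurable ?_
  filter_upwards with ω
  rw [Real.norm_of_nonneg (mul_nonneg (Yf_nonneg a b ω) (Yf_nonneg c d ω))]
  exact YY_le a b c d ω

lemma intYY_le (a b c d : Fin n × Fin n) (hb : ∀ e, lam e ≤ C) :
    ∫ ω, Yf X a b ω * Yf X c d ω ∂ℙ ≤ Mc C := by
  have hgint : Integrable (fun ω =>
      (((X a ω : ℝ))^4 + ((X b ω : ℝ))^4 + (((X c ω : ℝ))^4 + ((X d ω : ℝ))^4))/4) ℙ :=
    (((integrable_pow4 (hmeas a).aemeasurable (hd a)).add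
        (integrable_pow4 (hmeas b).aemeasurable (hd b))).add
      ((integrable_pow4 (hmeas c).aemeasurable (hd c)).add
        (integrable_pow4 (hmeas d).aemeasurable (hd d)))).div_const 4
  have hmono := integral_mono (intYY hmeas hd a b c d) hgint (fun ω => YY_le a b c d ω)
  refine le_trans hmono ?_
  have hint1 : Integrable (fun ω => ((X a ω : ℝ))^4) ℙ :=
    integrable_pow4 (hmeas a).aemeasurable (hd a)
  have hint2 : Integrable (fun ω => ((X b ω : ℝ))^4) ℙ :=
    integrable_pow4 (hmeas b).aemeasurable (hd b)
  have hint3 : Integrable (fun ω => ((X c ω : ℝ))^4) ℙ :=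
    integrable_pow4 (hmeas c).aemeasurable (hd c)
  have hint4 : Integrable (fun ω => ((X d ω : ℝ))^4) ℙ :=
    integrable_pow4 (hmeas d).aemeasurable (hd d)
  have hint12 : Integrable (fun ω => ((X a ω : ℝ))^4 + ((X b ω : ℝ))^4) ℙ := hint1.add hint2
  have hint34 : Integrable (fun ω => ((X c ω : ℝ))^4 + ((X d ω : ℝ))^4) ℙ := hint3.add hint4
  rw [integral_div, integral_add hint12 hint34, integral_add hint1 hint2,
    integral_add hint3 hint4]
  have h1 := exp4_le hmeas hd (C := C) a hb
  have h2 := exp4_le hmeas hd (C := C) b hb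
  have h3 := exp4_le hmeas hd (C := C) c hb
  have h4 := exp4_le hmeas hd (C := C) d hb
  have hM := Mc_pos C
  linarith

include hindep in
/-- independence: expectation of product over disjoint edge pairs factorizes -/
lemma indep_factor {a b c d : Fin n × Fin n}
    (hdisj : Disjoint ({a, b} : Finset (Fin n × Fin n)) ({c, d} : Finset (Fin n × Fin n))) :
    ∫ ω, Yf X a b ω * Yf X c d ω ∂ℙ = (∫ ω, Yf X a b ω ∂ℙ) * ∫ ω, Yf X c d ω ∂ℙ := by
  classical
  have hfin := hindep.indepFun_finset {a, b} {c, d} hdisj hmeas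
  have hma : a ∈ ({a, b} : Finset (Fin n × Fin n)) := by simp
  have hmb : b ∈ ({a, b} : Finset (Fin n × Fin n)) := by simp
  have hmc : c ∈ ({c, d} : Finset (Fin n × Fin n)) := by simp
  have hmd : d ∈ ({c, d} : Finset (Fin n × Fin n)) := by simp
  let φ : (∀ _e : ({a, b} : Finset (Fin n × Fin n)), ℕ) → ℝ :=
    fun v => (v ⟨a, hma⟩ : ℝ) * (v ⟨b, hmb⟩ : ℝ)
  let ψ : (∀ _e : ({c, d} : Finset (Fin n × Fin n)), ℕ) → ℝ :=
    fun v => (v ⟨c, hmc⟩ : ℝ) * (v ⟨d, hmd⟩ : ℝ)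
  have hφ : Measurable φ :=
    (((measurable_from_top (f := fun k : ℕ => (k:ℝ))).comp (measurable_pi_apply _)).mul
      ((measurable_from_top (f := fun k : ℕ => (k:ℝ))).comp (measurable_pi_apply _)))
  have hψ : Measurable ψ :=
    (((measurable_from_top (f := fun k : ℕ => (k:ℝ))).comp (measurable_pi_apply _)).mul
      ((measurable_from_top (f := fun k : ℕ => (k:ℝ))).comp (measurable_pi_apply _)))
  have hcomp := hfin.comp hφ hψ
  have hIF : IndepFun (Yf X a b) (Yf X c d) ℙ := hcomp
  exact hIF.integral_fun_mul_eq_mul_integral (intY hmeas hd a b).aestronglyMeasurable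
    (intY hmeas hd c d).aestronglyMeasurable

include hindep in
/-- mean of product over two distinct edges -/
lemma Ymean {a b : Fin n × Fin n} (hab : a ≠ b) :
    ∫ ω, Yf X a b ω ∂ℙ = (lam a : ℝ) * lam b := by
  have hpair : IndepFun (X a) (X b) ℙ := hindep.indepFun hab
  have hcast : Measurable (fun k : ℕ => (k:ℝ)) := measurable_from_top
  have h := (hpair.comp hcast hcast).integral_fun_mul_eq_mul_integral
    (integrable_cast (hmeas a).aemeasurable (hd a)).aestronglyMeasurable
    (integrable_cast (hmeas b).aemeasurable (hd b)).aestronglyMeasurable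
  have h' : ∫ ω, Yf X a b ω ∂ℙ = (∫ ω, ((X a ω : ℝ)) ∂ℙ) * ∫ ω, ((X b ω : ℝ)) ∂ℙ := h
  rw [h', integral_cast_eq (hmeas a).aemeasurable (hd a),
    integral_cast_eq (hmeas b).aemeasurable (hd b)]


variable (w : Fin n → Fin n → ℝ)

omit hd in
lemma meas_ft (t : Fin n × Fin n × Fin n) : Measurable (ftf X w t) :=
  (measY hmeas (E1 t) (E2 t)).const_mul _

omit hd in
lemma meas_Sf : Measurable (Sf X w) :=
  Finset.measurable_sum _ (fun t _ => meas_ft hmeas w t)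

lemma int_ft (t : Fin n × Fin n × Fin n) : Integrable (ftf X w t) ℙ :=
  (intY hmeas hd (E1 t) (E2 t)).const_mul _

lemma Ift (t : Fin n × Fin n × Fin n) :
    ∫ ω, ftf X w t ω ∂ℙ = w t.1 t.2.1 * ∫ ω, Yf X (E1 t) (E2 t) ω ∂ℙ :=
  integral_const_mul _ _

lemma int_ftft (t u : Fin n × Fin n × Fin n) :
    Integrable (fun ω => ftf X w t ω * ftf X w u ω) ℙ := by
  have heq : (fun ω => ftf X w t ω * ftf X w u ω)
      = fun ω => (w t.1 t.2.1 * w u.1 u.2.1)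
          * (Yf X (E1 t) (E2 t) ω * Yf X (E1 u) (E2 u) ω) := by
    funext ω; rw [ftf, ftf]; ring
  rw [heq]
  exact (intYY hmeas hd _ _ _ _).const_mul _

lemma Iftft (t u : Fin n × Fin n × Fin n) :
    ∫ ω, ftf X w t ω * ftf X w u ω ∂ℙ
      = (w t.1 t.2.1 * w u.1 u.2.1)
          * ∫ ω, Yf X (E1 t) (E2 t) ω * Yf X (E1 u) (E2 u) ω ∂ℙ := by
  have heq : (fun ω => ftf X w t ω * ftf X w u ω)
      = fun ω => (w t.1 t.2.1 * w u.1 u.2.1)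
          * (Yf X (E1 t) (E2 t) ω * Yf X (E1 u) (E2 u) ω) := by
    funext ω; rw [ftf, ftf]; ring
  rw [heq]
  exact integral_const_mul _ _

lemma int_Sf : Integrable (Sf X w) ℙ :=
  integrable_finset_sum _ (fun t _ => int_ft hmeas hd w t)

omit hmeas hd in
lemma Sf_sq_eq (ω : Ω) : (Sf X w ω)^2
    = ∑ t : Fin n × Fin n × Fin n, ∑ u : Fin n × Fin n × Fin n,
        ftf X w t ω * ftf X w u ω := by
  rw [Sf, sq, Finset.sum_mul_sum]

lemma int_Sf_sq : Integrable (fun ω => (Sf X w ω)^2) ℙ := by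
  have heq : (fun ω => (Sf X w ω)^2)
      = fun ω => ∑ t : Fin n × Fin n × Fin n, ∑ u : Fin n × Fin n × Fin n,
          ftf X w t ω * ftf X w u ω := by
    funext ω; exact Sf_sq_eq w ω
  rw [heq]
  exact integrable_finset_sum _ (fun t _ =>
    integrable_finset_sum _ (fun u _ => int_ftft hmeas hd w t u))

include hindep hb in
lemma cov_le (hw0 : ∀ i j, 0 ≤ w i j) (hw1 : ∀ i j, w i j ≤ 1)
    (t u : Fin n × Fin n × Fin n) :
    (∫ ω, ftf X w t ω * ftf X w u ω ∂ℙ)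
      - (∫ ω, ftf X w t ω ∂ℙ) * (∫ ω, ftf X w u ω ∂ℙ) ≤ Mc C * chi t u := by
  have hMc := Mc_pos C
  by_cases hdisj : Disjoint ({E1 t, E2 t} : Finset (Fin n × Fin n))
      ({E1 u, E2 u} : Finset (Fin n × Fin n))
  · have hfac := indep_factor hmeas hindep hd hdisj
    rw [Iftft hmeas hd w t u, hfac, Ift hmeas hd w t, Ift hmeas hd w u]
    have : w t.1 t.2.1 * w u.1 u.2.1
        * ((∫ ω, Yf X (E1 t) (E2 t) ω ∂ℙ) * ∫ ω, Yf X (E1 u) (E2 u) ω ∂ℙ)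
        - w t.1 t.2.1 * (∫ ω, Yf X (E1 t) (E2 t) ω ∂ℙ)
          * (w u.1 u.2.1 * ∫ ω, Yf X (E1 u) (E2 u) ω ∂ℙ) = 0 := by ring
    rw [this]
    exact mul_nonneg hMc.le (chi_nonneg t u)
  · have hchi : 1 ≤ chi t u := by
      rcases Finset.not_disjoint_iff.1 hdisj with ⟨x, hx1, hx2⟩
      simp only [Finset.mem_insert, Finset.mem_singleton] at hx1 hx2
      have h4 : E1 u = E1 t ∨ E1 u = E2 t ∨ E2 u = E1 t ∨ E2 u = E2 t := by
        rcases hx1 with h | h <;> rcases hx2 with h' | h'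
        · exact Or.inl (h'.symm.trans h)
        · exact Or.inr (Or.inr (Or.inl (h'.symm.trans h)))
        · exact Or.inr (Or.inl (h'.symm.trans h))
        · exact Or.inr (Or.inr (Or.inr (h'.symm.trans h)))
      have i1 : (0:ℝ) ≤ if E1 u = E1 t then (1:ℝ) else 0 := by split <;> norm_num
      have i2 : (0:ℝ) ≤ if E1 u = E2 t then (1:ℝ) else 0 := by split <;> norm_num
      have i3 : (0:ℝ) ≤ if E2 u = E1 t then (1:ℝ) else 0 := by split <;> norm_num
      have i4 : (0:ℝ) ≤ if E2 u = E2 t then (1:ℝ) else 0 := by split <;> norm_num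
      rw [chi]
      rcases h4 with h | h | h | h <;> rw [if_pos h] <;> linarith
    have h1 : (∫ ω, ftf X w t ω * ftf X w u ω ∂ℙ) ≤ Mc C := by
      rw [Iftft hmeas hd w t u]
      have hYY0 : 0 ≤ ∫ ω, Yf X (E1 t) (E2 t) ω * Yf X (E1 u) (E2 u) ω ∂ℙ :=
        integral_nonneg (fun ω => mul_nonneg (Yf_nonneg _ _ _) (Yf_nonneg _ _ _))
      have hYYM := intYY_le hmeas hd (E1 t) (E2 t) (E1 u) (E2 u) hb
      have hww : w t.1 t.2.1 * w u.1 u.2.1 ≤ 1 :=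
        mul_le_one₀ (hw1 _ _) (hw0 _ _) (hw1 _ _)
      have hww0 : 0 ≤ w t.1 t.2.1 * w u.1 u.2.1 := mul_nonneg (hw0 _ _) (hw0 _ _)
      nlinarith
    have h2 : 0 ≤ (∫ ω, ftf X w t ω ∂ℙ) * (∫ ω, ftf X w u ω ∂ℙ) := by
      have g1 : 0 ≤ ∫ ω, ftf X w t ω ∂ℙ :=
        integral_nonneg (fun ω => mul_nonneg (hw0 _ _) (Yf_nonneg _ _ _))
      have g2 : 0 ≤ ∫ ω, ftf X w u ω ∂ℙ :=
        integral_nonneg (fun ω => mul_nonneg (hw0 _ _) (Yf_nonneg _ _ _))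
      exact mul_nonneg g1 g2
    calc (∫ ω, ftf X w t ω * ftf X w u ω ∂ℙ)
          - (∫ ω, ftf X w t ω ∂ℙ) * (∫ ω, ftf X w u ω ∂ℙ) ≤ Mc C := by linarith
      _ = Mc C * 1 := by ring
      _ ≤ Mc C * chi t u := by
          exact mul_le_mul_of_nonneg_left hchi hMc.le

include hindep hb in
lemma var_le (hw0 : ∀ i j, 0 ≤ w i j) (hw1 : ∀ i j, w i j ≤ 1) :
    ∫ ω, (Sf X w ω - ∫ ω', Sf X w ω' ∂ℙ)^2 ∂ℙ ≤ 4 * Mc C * n^4 := by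
  set ES := ∫ ω', Sf X w ω' ∂ℙ with hES
  have hint : Integrable (Sf X w) ℙ := int_Sf hmeas hd w
  have hint2 : Integrable (fun ω => (Sf X w ω)^2) ℙ := int_Sf_sq hmeas hd w
  have hvar : ∫ ω, (Sf X w ω - ES)^2 ∂ℙ = (∫ ω, (Sf X w ω)^2 ∂ℙ) - ES^2 := by
    have heq : (fun ω => (Sf X w ω - ES)^2)
        = fun ω => (Sf X w ω)^2 - (2*ES) * Sf X w ω + ES^2 := by
      funext ω; ring
    have ha2 : Integrable (fun ω => (2*ES) * Sf X w ω) ℙ := hint.const_mul (2*ES)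
    have ha1 : Integrable (fun ω => (Sf X w ω)^2 - (2*ES) * Sf X w ω) ℙ := hint2.sub ha2
    rw [heq, integral_add ha1 (integrable_const _), integral_sub hint2 ha2,
      integral_const_mul, integral_const]
    simp only [measure_univ, ENNReal.toReal_one, smul_eq_mul, one_mul, probReal_univ]
    rw [← hES]; ring
  rw [hvar]
  have hsum2 : ∫ ω, (Sf X w ω)^2 ∂ℙ
      = ∑ t : Fin n × Fin n × Fin n, ∑ u : Fin n × Fin n × Fin n,
          ∫ ω, ftf X w t ω * ftf X w u ω ∂ℙ := by
    have heq : (fun ω => (Sf X w ω)^2)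
        = fun ω => ∑ t : Fin n × Fin n × Fin n, ∑ u : Fin n × Fin n × Fin n,
            ftf X w t ω * ftf X w u ω := by
      funext ω; exact Sf_sq_eq w ω
    rw [heq, integral_finset_sum _ (fun t _ =>
      integrable_finset_sum _ (fun u _ => int_ftft hmeas hd w t u))]
    exact Finset.sum_congr rfl (fun t _ =>
      integral_finset_sum _ (fun u _ => int_ftft hmeas hd w t u))
  have hsum1 : ES = ∑ t : Fin n × Fin n × Fin n, ∫ ω, ftf X w t ω ∂ℙ :=
    integral_finset_sum _ (fun t _ => int_ft hmeas hd w t)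
  have hsq : ES^2 = ∑ t : Fin n × Fin n × Fin n, ∑ u : Fin n × Fin n × Fin n,
      (∫ ω, ftf X w t ω ∂ℙ) * (∫ ω, ftf X w u ω ∂ℙ) := by
    rw [hsum1, sq, Finset.sum_mul_sum]
  rw [hsum2, hsq, ← Finset.sum_sub_distrib]
  have hinner : ∀ t : Fin n × Fin n × Fin n,
      (∑ u : Fin n × Fin n × Fin n, ∫ ω, ftf X w t ω * ftf X w u ω ∂ℙ)
        - (∑ u : Fin n × Fin n × Fin n,
            (∫ ω, ftf X w t ω ∂ℙ) * (∫ ω, ftf X w u ω ∂ℙ))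
      = ∑ u : Fin n × Fin n × Fin n,
          ((∫ ω, ftf X w t ω * ftf X w u ω ∂ℙ)
            - (∫ ω, ftf X w t ω ∂ℙ) * (∫ ω, ftf X w u ω ∂ℙ)) := by
    intro t; rw [← Finset.sum_sub_distrib]
  calc ∑ t : Fin n × Fin n × Fin n,
        ((∑ u : Fin n × Fin n × Fin n, ∫ ω, ftf X w t ω * ftf X w u ω ∂ℙ)
          - ∑ u : Fin n × Fin n × Fin n,
              (∫ ω, ftf X w t ω ∂ℙ) * (∫ ω, ftf X w u ω ∂ℙ))
      = ∑ t : Fin n × Fin n × Fin n, ∑ u : Fin n × Fin n × Fin n,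
          ((∫ ω, ftf X w t ω * ftf X w u ω ∂ℙ)
            - (∫ ω, ftf X w t ω ∂ℙ) * (∫ ω, ftf X w u ω ∂ℙ)) :=
        Finset.sum_congr rfl (fun t _ => hinner t)
    _ ≤ ∑ t : Fin n × Fin n × Fin n, ∑ u : Fin n × Fin n × Fin n, Mc C * chi t u :=
        Finset.sum_le_sum (fun t _ => Finset.sum_le_sum (fun u _ =>
          cov_le hmeas hindep hd hb w hw0 hw1 t u))
    _ = Mc C * ∑ t : Fin n × Fin n × Fin n, ∑ u : Fin n × Fin n × Fin n, chi t u := by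
        rw [Finset.mul_sum]
        exact Finset.sum_congr rfl (fun t _ => by rw [Finset.mul_sum])
    _ = Mc C * ∑ t : Fin n × Fin n × Fin n, (4 * n : ℝ) := by
        congr 1
        exact Finset.sum_congr rfl (fun t _ => sum_chi t)
    _ ≤ 4 * Mc C * n^4 := by
        rw [Finset.sum_const, Finset.card_univ]
        have hcard : Fintype.card (Fin n × Fin n × Fin n) = n^3 := by
          simp [Fintype.card_prod]; ring
        rw [hcard]
        have hMc := Mc_pos C
        have : (↑(n^3) : ℝ) = (n:ℝ)^3 := by push_cast; ring
        rw [nsmul_eq_mul, this]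
        calc Mc C * ((n:ℝ)^3 * (4 * n)) = 4 * Mc C * (n:ℝ)^4 := by ring
          _ ≤ 4 * Mc C * n^4 := le_refl _

include hindep hb in
lemma cheb (hw0 : ∀ i j, 0 ≤ w i j) (hw1 : ∀ i j, w i j ≤ 1) {a : ℝ} (ha : 0 < a) :
    ℙ {ω | a ≤ |Sf X w ω - ∫ ω', Sf X w ω' ∂ℙ|}
      ≤ ENNReal.ofReal (4 * Mc C * n^4 / a^2) := by
  set ES := ∫ ω', Sf X w ω' ∂ℙ with hES
  set D : Ω → ℝ := fun ω => Sf X w ω - ES with hD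
  have hDm : Measurable D := (meas_Sf hmeas w).sub measurable_const
  have hint : Integrable (Sf X w) ℙ := int_Sf hmeas hd w
  have hint2 : Integrable (fun ω => (Sf X w ω)^2) ℙ := int_Sf_sq hmeas hd w
  have hintD2 : Integrable (fun ω => (D ω)^2) ℙ := by
    have heq : (fun ω => (D ω)^2)
        = fun ω => (Sf X w ω)^2 - (2*ES) * Sf X w ω + ES^2 := by
      funext ω; rw [hD]; ring
    rw [heq]
    exact (hint2.sub (hint.const_mul (2*ES))).add (integrable_const _)
  have hsub : {ω | a ≤ |D ω|} ⊆ {ω | ENNReal.ofReal (a^2) ≤ ENNReal.ofReal ((D ω)^2)} := by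
    intro ω hω
    simp only [Set.mem_setOf_eq] at hω ⊢
    apply ENNReal.ofReal_le_ofReal
    calc a^2 ≤ |D ω|^2 := by
          apply pow_le_pow_left₀ ha.le hω
      _ = (D ω)^2 := sq_abs _
  calc ℙ {ω | a ≤ |D ω|}
      ≤ ℙ {ω | ENNReal.ofReal (a^2) ≤ ENNReal.ofReal ((D ω)^2)} := measure_mono hsub
    _ ≤ (∫⁻ ω, ENNReal.ofReal ((D ω)^2) ∂ℙ) / ENNReal.ofReal (a^2) :=
        meas_ge_le_lintegral_div
          (ENNReal.measurable_ofReal.comp (hDm.pow_const 2)).aemeasurable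
          (by simp [ENNReal.ofReal_pos]; positivity) ENNReal.ofReal_ne_top
    _ = ENNReal.ofReal (∫ ω, (D ω)^2 ∂ℙ) / ENNReal.ofReal (a^2) := by
        rw [ofReal_integral_eq_lintegral_ofReal hintD2
          (Filter.Eventually.of_forall (fun ω => sq_nonneg _))]
    _ = ENNReal.ofReal ((∫ ω, (D ω)^2 ∂ℙ) / a^2) := by
        rw [ENNReal.ofReal_div_of_pos (by positivity)]
    _ ≤ ENNReal.ofReal (4 * Mc C * n^4 / a^2) := by
        apply ENNReal.ofReal_le_ofReal
        apply div_le_div_of_nonneg_right ?_ (by positivity)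
        exact var_le hmeas hindep hd hb w hw0 hw1

include hindep hb in
lemma mean_err (hw0 : ∀ i j, 0 ≤ w i j) (hw1 : ∀ i j, w i j ≤ 1) :
    |(∫ ω, Sf X w ω ∂ℙ)
        - ∑ t : Fin n × Fin n × Fin n, w t.1 t.2.1 * ((lam (E1 t) : ℝ) * (lam (E2 t) : ℝ))|
      ≤ n * (Mc C + 1 + (C:ℝ)^2) := by
  have hsum1 : ∫ ω, Sf X w ω ∂ℙ = ∑ t : Fin n × Fin n × Fin n, ∫ ω, ftf X w t ω ∂ℙ :=
    integral_finset_sum _ (fun t _ => int_ft hmeas hd w t)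
  rw [hsum1, ← Finset.sum_sub_distrib]
  have hterm : ∀ t : Fin n × Fin n × Fin n,
      |(∫ ω, ftf X w t ω ∂ℙ) - w t.1 t.2.1 * ((lam (E1 t) : ℝ) * (lam (E2 t) : ℝ))|
        ≤ if E1 t = E2 t then (Mc C + 1 + (C:ℝ)^2) else 0 := by
    intro t
    by_cases h : E1 t = E2 t
    · rw [if_pos h]
      have hI : 0 ≤ ∫ ω, ftf X w t ω ∂ℙ :=
        integral_nonneg (fun ω => mul_nonneg (hw0 _ _) (Yf_nonneg _ _ _))
      have hIle : ∫ ω, ftf X w t ω ∂ℙ ≤ Mc C + 1 := by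
        rw [Ift hmeas hd w t]
        have hY0 := intY_nonneg (X := X) (E1 t) (E2 t)
        have hYle := intY_le hmeas hd (E1 t) (E2 t) hb
        have hMc := Mc_pos C
        nlinarith [hw0 t.1 t.2.1, hw1 t.1 t.2.1]
      have hlam1 : (lam (E1 t) : ℝ) ≤ C := by exact_mod_cast hb (E1 t)
      have hlam2 : (lam (E2 t) : ℝ) ≤ C := by exact_mod_cast hb (E2 t)
      have hlam1' : (0:ℝ) ≤ (lam (E1 t) : ℝ) := (lam (E1 t)).coe_nonneg
      have hlam2' : (0:ℝ) ≤ (lam (E2 t) : ℝ) := (lam (E2 t)).coe_nonneg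
      have htau : 0 ≤ w t.1 t.2.1 * ((lam (E1 t) : ℝ) * (lam (E2 t) : ℝ)) :=
        mul_nonneg (hw0 _ _) (mul_nonneg hlam1' hlam2')
      have htau2 : w t.1 t.2.1 * ((lam (E1 t) : ℝ) * (lam (E2 t) : ℝ)) ≤ (C:ℝ)^2 := by
        have h1 : (lam (E1 t) : ℝ) * (lam (E2 t) : ℝ) ≤ (C:ℝ)^2 := by nlinarith
        nlinarith [hw0 t.1 t.2.1, hw1 t.1 t.2.1]
      rw [abs_le]
      constructor <;> nlinarith [Mc_pos C]
    · rw [if_neg h]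
      have hY := Ymean hmeas hindep hd (a := E1 t) (b := E2 t) h
      rw [Ift hmeas hd w t, hY]
      simp
  calc |∑ t : Fin n × Fin n × Fin n,
        ((∫ ω, ftf X w t ω ∂ℙ) - w t.1 t.2.1 * ((lam (E1 t) : ℝ) * (lam (E2 t) : ℝ)))|
      ≤ ∑ t : Fin n × Fin n × Fin n,
          |(∫ ω, ftf X w t ω ∂ℙ) - w t.1 t.2.1 * ((lam (E1 t) : ℝ) * (lam (E2 t) : ℝ))| :=
        Finset.abs_sum_le_sum_abs _ _
    _ ≤ ∑ t : Fin n × Fin n × Fin n, (if E1 t = E2 t then (Mc C + 1 + (C:ℝ)^2) else 0) :=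
        Finset.sum_le_sum (fun t _ => hterm t)
    _ = (Mc C + 1 + (C:ℝ)^2) * ∑ t : Fin n × Fin n × Fin n,
          (if E1 t = E2 t then (1:ℝ) else 0) := by
        rw [Finset.mul_sum]
        exact Finset.sum_congr rfl (fun t _ => by split <;> simp)
    _ = (Mc C + 1 + (C:ℝ)^2) * n := by rw [count_diag]
    _ = n * (Mc C + 1 + (C:ℝ)^2) := by ring

end Core

/-- The fraction of directed paths of length 2 going from group `r` to group `s`,
computed from a (real-valued) adjacency matrix `a` on the node set `Fin n` with group
assignment `g`.  Applied to the matrix of Poisson means `μ` it gives the model fraction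
`e^{(2)}_{rs} = (∑_k d^i_{k,r} d^o_{k,s}) / (∑_k d^i_k d^o_k)`, and applied to a sampled
adjacency matrix it gives the sampled fraction `ê^{(2)}_{rs}`. -/
noncomputable def pathFrac2 {G : Type*} [Fintype G] [DecidableEq G] {n : ℕ}
    (g : Fin n → G) (a : Fin n → Fin n → ℝ) (r s : G) : ℝ :=
  (∑ i : Fin n, ∑ j : Fin n, ∑ k : Fin n,
      (if g i = r then (1 : ℝ) else 0) * (if g j = s then (1 : ℝ) else 0) * (a i k * a k j)) /
  (∑ i : Fin n, ∑ j : Fin n, ∑ k : Fin n, a i k * a k j)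

/-- The assortativity on paths of length 2:
`r⁽²⁾ = (∑_r e_{rr} − ∑_r a_r b_r) / (1 − ∑_r a_r b_r)` where `e_{rs}` is the fraction of
length-2 paths from group `r` to group `s`, `a_r = ∑_s e_{rs}` and `b_r = ∑_s e_{sr}`. -/
noncomputable def assort2 {G : Type*} [Fintype G] [DecidableEq G] {n : ℕ}
    (g : Fin n → G) (a : Fin n → Fin n → ℝ) : ℝ :=
  ((∑ r : G, pathFrac2 g a r r) -
      ∑ r : G, (∑ s : G, pathFrac2 g a r s) * (∑ s : G, pathFrac2 g a s r)) /
  (1 - ∑ r : G, (∑ s : G, pathFrac2 g a r s) * (∑ s : G, pathFrac2 g a s r))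


/-- triple sum statistic with weight -/
noncomputable def NumS {n : ℕ} (w : Fin n → Fin n → ℝ) (a : Fin n → Fin n → ℝ) : ℝ :=
  ∑ t : Fin n × Fin n × Fin n, w t.1 t.2.1 * (a t.1 t.2.2 * a t.2.2 t.2.1)

/-- indicator weight -/
def wInd {G : Type*} [DecidableEq G] {n : ℕ} (g : Fin n → G) (r s : G) :
    Fin n → Fin n → ℝ :=
  fun i j => (if g i = r then (1 : ℝ) else 0) * (if g j = s then (1 : ℝ) else 0)

def wOne {n : ℕ} : Fin n → Fin n → ℝ := fun _ _ => 1

lemma NumS_eq_triple {n : ℕ} (w : Fin n → Fin n → ℝ) (a : Fin n → Fin n → ℝ) :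
    NumS w a = ∑ i : Fin n, ∑ j : Fin n, ∑ k : Fin n, w i j * (a i k * a k j) := by
  rw [NumS, Fintype.sum_prod_type]
  exact Finset.sum_congr rfl (fun i _ => by rw [Fintype.sum_prod_type])

lemma pathFrac2_eq_NumS {G : Type*} [Fintype G] [DecidableEq G] {n : ℕ}
    (g : Fin n → G) (a : Fin n → Fin n → ℝ) (r s : G) :
    pathFrac2 g a r s = NumS (wInd g r s) a / NumS wOne a := by
  rw [pathFrac2, NumS_eq_triple, NumS_eq_triple]
  congr 1
  simp [wOne]

lemma wInd_nonneg {G : Type*} [DecidableEq G] {n : ℕ} (g : Fin n → G) (r s : G) (i j : Fin n) :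
    0 ≤ wInd g r s i j := by
  rw [wInd]; split <;> split <;> norm_num

lemma wInd_le_one {G : Type*} [DecidableEq G] {n : ℕ} (g : Fin n → G) (r s : G) (i j : Fin n) :
    wInd g r s i j ≤ 1 := by
  rw [wInd]; split <;> split <;> norm_num

lemma NumS_nonneg {n : ℕ} {w a : Fin n → Fin n → ℝ} (hw : ∀ i j, 0 ≤ w i j)
    (ha : ∀ i j, 0 ≤ a i j) : 0 ≤ NumS w a :=
  Finset.sum_nonneg fun t _ => mul_nonneg (hw _ _) (mul_nonneg (ha _ _) (ha _ _))

lemma NumS_le {n : ℕ} {w w' a : Fin n → Fin n → ℝ} (hw : ∀ i j, w i j ≤ w' i j)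
    (ha : ∀ i j, 0 ≤ a i j) : NumS w a ≤ NumS w' a :=
  Finset.sum_le_sum fun t _ => mul_le_mul_of_nonneg_right (hw _ _)
    (mul_nonneg (ha _ _) (ha _ _))

lemma sum_wInd {G : Type*} [Fintype G] [DecidableEq G] {n : ℕ} (g : Fin n → G) (i j : Fin n) :
    ∑ r : G, ∑ s : G, wInd g r s i j = 1 := by
  simp only [wInd]
  have h1 : ∀ r : G, ∑ s : G, (if g i = r then (1:ℝ) else 0) * (if g j = s then 1 else 0)
      = (if g i = r then (1:ℝ) else 0) := by
    intro r
    rw [← Finset.mul_sum, Finset.sum_ite_eq Finset.univ (g j) (fun _ => (1:ℝ))]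
    simp
  simp_rw [h1]
  rw [Finset.sum_ite_eq Finset.univ (g i) (fun _ => (1:ℝ))]
  simp

lemma sum_NumS_wInd {G : Type*} [Fintype G] [DecidableEq G] {n : ℕ} (g : Fin n → G)
    (a : Fin n → Fin n → ℝ) :
    ∑ r : G, ∑ s : G, NumS (wInd g r s) a = NumS wOne a := by
  simp only [NumS]
  have h1 : ∀ r : G, ∑ s : G, ∑ t : Fin n × Fin n × Fin n,
      wInd g r s t.1 t.2.1 * (a t.1 t.2.2 * a t.2.2 t.2.1)
      = ∑ t : Fin n × Fin n × Fin n, ∑ s : G,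
          wInd g r s t.1 t.2.1 * (a t.1 t.2.2 * a t.2.2 t.2.1) :=
    fun r => Finset.sum_comm
  simp_rw [h1]
  rw [Finset.sum_comm]
  refine Finset.sum_congr rfl fun t _ => ?_
  have h2 : ∀ r : G, ∑ s : G, wInd g r s t.1 t.2.1 * (a t.1 t.2.2 * a t.2.2 t.2.1)
      = (∑ s : G, wInd g r s t.1 t.2.1) * (a t.1 t.2.2 * a t.2.2 t.2.1) :=
    fun r => (Finset.sum_mul _ _ _).symm
  simp_rw [h2]
  rw [← Finset.sum_mul]
  have h3 : ∑ r : G, ∑ s : G, wInd g r s t.1 t.2.1 = 1 := sum_wInd g t.1 t.2.1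
  rw [h3, wOne, one_mul]

-- basic bounds on pathFrac2 values
lemma pathFrac2_nonneg {G : Type*} [Fintype G] [DecidableEq G] {n : ℕ}
    (g : Fin n → G) {a : Fin n → Fin n → ℝ} (ha : ∀ i j, 0 ≤ a i j) (r s : G) :
    0 ≤ pathFrac2 g a r s := by
  rw [pathFrac2_eq_NumS]
  exact div_nonneg (NumS_nonneg (wInd_nonneg g r s) ha) (NumS_nonneg (fun _ _ => zero_le_one) ha)

lemma pathFrac2_sum_le_one {G : Type*} [Fintype G] [DecidableEq G] {n : ℕ}
    (g : Fin n → G) {a : Fin n → Fin n → ℝ} (ha : ∀ i j, 0 ≤ a i j) :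
    ∑ r : G, ∑ s : G, pathFrac2 g a r s ≤ 1 := by
  simp_rw [pathFrac2_eq_NumS, ← Finset.sum_div]
  by_cases hD : NumS wOne a = 0
  · rw [hD]; simp
  · have hD' : 0 < NumS wOne a :=
      lt_of_le_of_ne (NumS_nonneg (fun _ _ => zero_le_one) ha) (Ne.symm hD)
    rw [div_le_one hD', sum_NumS_wInd]

/-- ratio perturbation bound -/
lemma ratio_close {sw s1 tw t1 c θ η : ℝ} (hc : 0 < c) (hη : 0 < η)
    (ht1 : c < t1) (hsw0 : 0 ≤ sw) (hswle : sw ≤ s1) (htw0 : 0 ≤ tw) (htwle : tw ≤ t1)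
    (h1 : |sw - tw| < θ) (h2 : |s1 - t1| < θ)
    (hθ1 : θ ≤ η * c / 8) (hθ2 : θ ≤ c / 2) :
    |sw / s1 - tw / t1| < η := by
  have h1' := abs_lt.1 h1
  have h2' := abs_lt.1 h2
  have hθ0 : 0 < θ := lt_of_le_of_lt (abs_nonneg _) h1
  have hs1 : c/2 < s1 := by linarith
  have hs1' : 0 < s1 := by linarith
  have ht1' : 0 < t1 := by linarith
  rw [div_sub_div _ _ (ne_of_gt hs1') (ne_of_gt ht1'), abs_div,
    abs_of_pos (mul_pos hs1' ht1'), div_lt_iff₀ (mul_pos hs1' ht1'), abs_lt]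
  have e1 : (sw - tw)*t1 < θ*t1 := by nlinarith
  have e2 : tw*(t1-s1) ≤ tw*θ := mul_le_mul_of_nonneg_left (by linarith) htw0
  have e3 : tw*θ ≤ t1*θ := mul_le_mul_of_nonneg_right htwle hθ0.le
  have e4 : 2*(θ*t1) ≤ (η*c/4)*t1 := by nlinarith
  have e5 : (η*c/4)*t1 < η*(s1*t1) := by
    have h : c/4 < s1 := by linarith
    calc (η*c/4)*t1 = (η*t1)*(c/4) := by ring
      _ < (η*t1)*s1 := mul_lt_mul_of_pos_left h (mul_pos hη ht1')
      _ = η*(s1*t1) := by ring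
  have f1 : (tw - sw)*t1 < θ*t1 := by nlinarith
  have f2 : tw*(s1-t1) ≤ tw*θ := mul_le_mul_of_nonneg_left (by linarith) htw0
  constructor
  · nlinarith
  · nlinarith

/-- deterministic stability of the assortativity functional -/
lemma det_assort {G : Type*} [Fintype G] [DecidableEq G] (p q : G → G → ℝ) (δ η : ℝ)
    (hδ : 0 < δ) (hp0 : ∀ r s, 0 ≤ p r s) (hp1 : ∑ r : G, ∑ s : G, p r s ≤ 1)
    (hq0 : ∀ r s, 0 ≤ q r s) (hq1 : ∑ r : G, ∑ s : G, q r s ≤ 1)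
    (hynd : ∑ r : G, (∑ s : G, q r s) * (∑ s : G, q s r) ≤ 1 - δ)
    (hη0 : 0 ≤ η) (hη : (4 * (Fintype.card G : ℝ)^2 + 1) * η ≤ δ)
    (hcl : ∀ r s, |p r s - q r s| ≤ η) :
    |((∑ r : G, p r r) - ∑ r : G, (∑ s : G, p r s) * (∑ s : G, p s r))
        / (1 - ∑ r : G, (∑ s : G, p r s) * (∑ s : G, p s r))
      - ((∑ r : G, q r r) - ∑ r : G, (∑ s : G, q r s) * (∑ s : G, q s r))
        / (1 - ∑ r : G, (∑ s : G, q r s) * (∑ s : G, q s r))|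
      ≤ 14 * ((Fintype.card G : ℝ)^2 + 1) * η / δ^2 := by
  classical
  set m : ℝ := (Fintype.card G : ℝ) with hm
  have hm0 : 0 ≤ m := Nat.cast_nonneg _
  set ap : G → ℝ := fun r => ∑ s : G, p r s with hap
  set bp : G → ℝ := fun r => ∑ s : G, p s r with hbp
  set aq : G → ℝ := fun r => ∑ s : G, q r s with haq
  set bq : G → ℝ := fun r => ∑ s : G, q s r with hbq
  have hap0 : ∀ r, 0 ≤ ap r := fun r => Finset.sum_nonneg fun s _ => hp0 r s
  have haq0 : ∀ r, 0 ≤ aq r := fun r => Finset.sum_nonneg fun s _ => hq0 r s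
  have hbp0 : ∀ r, 0 ≤ bp r := fun r => Finset.sum_nonneg fun s _ => hp0 s r
  have hbq0 : ∀ r, 0 ≤ bq r := fun r => Finset.sum_nonneg fun s _ => hq0 s r
  have hap1 : ∀ r, ap r ≤ 1 := fun r =>
    le_trans (Finset.single_le_sum (f := ap) (fun r _ => hap0 r) (Finset.mem_univ r)) hp1
  have haq1 : ∀ r, aq r ≤ 1 := fun r =>
    le_trans (Finset.single_le_sum (f := aq) (fun r _ => haq0 r) (Finset.mem_univ r)) hq1
  have hbsum_p : ∑ r : G, bp r = ∑ r : G, ∑ s : G, p r s := Finset.sum_comm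
  have hbsum_q : ∑ r : G, bq r = ∑ r : G, ∑ s : G, q r s := Finset.sum_comm
  have hbp1 : ∀ r, bp r ≤ 1 := fun r => le_trans
    (Finset.single_le_sum (f := bp) (fun r _ => hbp0 r) (Finset.mem_univ r))
    (le_trans (le_of_eq hbsum_p) hp1)
  have hbq1 : ∀ r, bq r ≤ 1 := fun r => le_trans
    (Finset.single_le_sum (f := bq) (fun r _ => hbq0 r) (Finset.mem_univ r))
    (le_trans (le_of_eq hbsum_q) hq1)
  set xp : ℝ := ∑ r : G, p r r with hxp
  set xq : ℝ := ∑ r : G, q r r with hxq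
  set yp : ℝ := ∑ r : G, ap r * bp r with hyp
  set yq : ℝ := ∑ r : G, aq r * bq r with hyq
  have hxp0 : 0 ≤ xp := Finset.sum_nonneg fun r _ => hp0 r r
  have hxq0 : 0 ≤ xq := Finset.sum_nonneg fun r _ => hq0 r r
  have hxp1 : xp ≤ 1 := by
    refine le_trans (Finset.sum_le_sum (fun r _ => ?_)) (le_trans (le_refl _) hp1)
    exact Finset.single_le_sum (f := fun s => p r s) (fun s _ => hp0 r s) (Finset.mem_univ r)
  have hxq1 : xq ≤ 1 := by
    refine le_trans (Finset.sum_le_sum (fun r _ => ?_)) (le_trans (le_refl _) hq1)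
    exact Finset.single_le_sum (f := fun s => q r s) (fun s _ => hq0 r s) (Finset.mem_univ r)
  have hyp0 : 0 ≤ yp := Finset.sum_nonneg fun r _ => mul_nonneg (hap0 r) (hbp0 r)
  have hyq0 : 0 ≤ yq := Finset.sum_nonneg fun r _ => mul_nonneg (haq0 r) (hbq0 r)
  have hyq1 : yq ≤ 1 - δ := hynd
  -- difference bounds
  have hcard : ∀ f : G → ℝ, (∀ r, |f r| ≤ η) → |∑ r : G, f r| ≤ m * η := by
    intro f hf
    calc |∑ r : G, f r| ≤ ∑ r : G, |f r| := Finset.abs_sum_le_sum_abs _ _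
      _ ≤ ∑ _r : G, η := Finset.sum_le_sum fun r _ => hf r
      _ = m * η := by rw [Finset.sum_const, Finset.card_univ, nsmul_eq_mul]
  have hxd : |xp - xq| ≤ m * η := by
    rw [hxp, hxq, ← Finset.sum_sub_distrib]
    exact hcard _ fun r => hcl r r
  have hadif : ∀ r, |ap r - aq r| ≤ m * η := by
    intro r
    rw [hap, haq, ← Finset.sum_sub_distrib]
    exact hcard _ fun s => hcl r s
  have hbdif : ∀ r, |bp r - bq r| ≤ m * η := by
    intro r
    rw [hbp, hbq, ← Finset.sum_sub_distrib]
    exact hcard _ fun s => hcl s r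
  have hyd : |yp - yq| ≤ 2 * m^2 * η := by
    rw [hyp, hyq, ← Finset.sum_sub_distrib]
    have hterm : ∀ r, |ap r * bp r - aq r * bq r| ≤ 2 * m * η := by
      intro r
      have e1 : ap r * bp r - aq r * bq r = (ap r - aq r) * bp r + aq r * (bp r - bq r) := by
        ring
      rw [e1]
      calc |(ap r - aq r) * bp r + aq r * (bp r - bq r)|
          ≤ |(ap r - aq r) * bp r| + |aq r * (bp r - bq r)| := abs_add_le _ _
        _ = |ap r - aq r| * |bp r| + |aq r| * |bp r - bq r| := by rw [abs_mul, abs_mul]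
        _ ≤ (m * η) * 1 + 1 * (m * η) := by
            apply add_le_add
            · apply mul_le_mul (hadif r) _ (abs_nonneg _) (by positivity)
              rw [abs_of_nonneg (hbp0 r)]; exact hbp1 r
            · apply mul_le_mul _ (hbdif r) (abs_nonneg _) zero_le_one
              rw [abs_of_nonneg (haq0 r)]; exact haq1 r
        _ = 2 * m * η := by ring
    calc |∑ r : G, (ap r * bp r - aq r * bq r)|
        ≤ ∑ r : G, |ap r * bp r - aq r * bq r| := Finset.abs_sum_le_sum_abs _ _
      _ ≤ ∑ _r : G, 2 * m * η := Finset.sum_le_sum fun r _ => hterm r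
      _ = m * (2 * m * η) := by rw [Finset.sum_const, Finset.card_univ, nsmul_eq_mul]
      _ = 2 * m^2 * η := by ring
  -- denominators
  have hypd : yp ≤ 1 - δ/2 := by
    have := abs_le.1 hyd
    have h2m : 2 * m^2 * η ≤ δ/2 := by nlinarith
    linarith
  have hdp : δ/2 ≤ 1 - yp := by linarith
  have hdq : δ ≤ 1 - yq := by linarith
  have hdp0 : 0 < 1 - yp := by linarith
  have hdq0 : 0 < 1 - yq := by linarith
  -- main rewrite
  have heq : (xp - yp) / (1 - yp) - (xq - yq) / (1 - yq)
      = (((xp - xq) - (yp - yq)) * (1 - yq) + (xq - yq) * (yp - yq))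
        / ((1 - yp) * (1 - yq)) := by
    field_simp
    ring
  rw [heq, abs_div, abs_of_pos (mul_pos hdp0 hdq0)]
  have hnum : |((xp - xq) - (yp - yq)) * (1 - yq) + (xq - yq) * (yp - yq)|
      ≤ (m * η + 2 * m^2 * η) * 1 + 1 * (2 * m^2 * η) := by
    calc |((xp - xq) - (yp - yq)) * (1 - yq) + (xq - yq) * (yp - yq)|
        ≤ |((xp - xq) - (yp - yq)) * (1 - yq)| + |(xq - yq) * (yp - yq)| := abs_add_le _ _
      _ = |(xp - xq) - (yp - yq)| * |1 - yq| + |xq - yq| * |yp - yq| := by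
          rw [abs_mul, abs_mul]
      _ ≤ (m * η + 2 * m^2 * η) * 1 + 1 * (2 * m^2 * η) := by
          apply add_le_add
          · apply mul_le_mul _ _ (abs_nonneg _) (by positivity)
            · calc |(xp - xq) - (yp - yq)| ≤ |xp - xq| + |yp - yq| := abs_sub _ _
                _ ≤ m * η + 2 * m^2 * η := add_le_add hxd hyd
            · rw [abs_of_pos hdq0]; linarith
          · apply mul_le_mul _ hyd (abs_nonneg _) zero_le_one
            rw [abs_le]; constructor <;> linarith
  have hden : δ^2/2 ≤ (1 - yp) * (1 - yq) := by nlinarith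
  calc |((xp - xq) - (yp - yq)) * (1 - yq) + (xq - yq) * (yp - yq)|
        / ((1 - yp) * (1 - yq))
      ≤ ((m * η + 2 * m^2 * η) * 1 + 1 * (2 * m^2 * η)) / ((1 - yp) * (1 - yq)) :=
        div_le_div_of_nonneg_right hnum (mul_pos hdp0 hdq0).le
    _ ≤ ((m * η + 2 * m^2 * η) * 1 + 1 * (2 * m^2 * η)) / (δ^2/2) := by
        apply div_le_div_of_nonneg_left (by positivity) (by positivity) hden
    _ ≤ 14 * (m^2 + 1) * η / δ^2 := by
        rw [div_le_div_iff₀ (by positivity) (by positivity)]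
        have k1 : m + 4*m^2 ≤ 7*(m^2+1) := by nlinarith [sq_nonneg (m-1)]
        have k2 : (0:ℝ) ≤ η * δ^2 := mul_nonneg hη0 (sq_nonneg δ)
        nlinarith [mul_le_mul_of_nonneg_right k1 k2]


-- ===== glue lemmas =====

lemma NumS_wOne_eq {n : ℕ} (M : Fin n → Fin n → ℝ) :
    NumS wOne M = ∑ k : Fin n, (∑ i : Fin n, M i k) * (∑ j : Fin n, M k j) := by
  rw [NumS_eq_triple]
  simp only [wOne, one_mul]
  have h1 : ∀ i : Fin n, ∑ j : Fin n, ∑ k : Fin n, M i k * M k j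
      = ∑ k : Fin n, ∑ j : Fin n, M i k * M k j := fun i => Finset.sum_comm
  simp_rw [h1]
  rw [Finset.sum_comm]
  refine Finset.sum_congr rfl fun k _ => ?_
  rw [Finset.sum_mul_sum]

lemma aem_of_map_poisson {Ω : Type*} [MeasureSpace Ω] {X : Ω → ℕ} {r : ℝ≥0}
    (h : Measure.map X ℙ = poissonMeasure r) : AEMeasurable X ℙ := by
  by_contra hc
  rw [Measure.map_of_not_aemeasurable hc] at h
  have h1 : (poissonMeasure r) Set.univ = 1 := measure_univ
  rw [← h] at h1
  simp at h1

lemma iIndepFun_congr {ι : Type*} {Ω : Type*} [MeasureSpace Ω] {f f' : ι → Ω → ℕ}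
    (h : iIndepFun f ℙ) (heq : ∀ i, f i =ᵐ[ℙ] f' i) :
    iIndepFun f' ℙ := by
  classical
  rw [iIndepFun_iff_measure_inter_preimage_eq_mul] at h ⊢
  intro S sets hsets
  have hset : ∀ i, ℙ (f i ⁻¹' sets i) = ℙ (f' i ⁻¹' sets i) := by
    intro i
    apply measure_congr
    rw [Filter.eventuallyEq_set]
    filter_upwards [heq i] with ω hω
    simp [Set.mem_preimage, hω]
  have hinter : ℙ (⋂ i ∈ S, f i ⁻¹' sets i) = ℙ (⋂ i ∈ S, f' i ⁻¹' sets i) := by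
    apply measure_congr
    rw [Filter.eventuallyEq_set]
    have hall : ∀ᵐ ω ∂ℙ, ∀ i ∈ S, f i ω = f' i ω :=
      (Filter.eventually_all_finset S).2 fun i _ => heq i
    filter_upwards [hall] with ω hω
    simp only [Set.mem_iInter, Set.mem_preimage]
    constructor
    · intro hmem i hi; rw [← hω i hi]; exact hmem i hi
    · intro hmem i hi; rw [hω i hi]; exact hmem i hi
  rw [← hinter, h S hsets]
  exact Finset.prod_congr rfl fun i _ => hset i

lemma div_div_div_same {a b m : ℝ} (hm : m ≠ 0) : (a / m) / (b / m) = a / b := by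
  rcases eq_or_ne b 0 with rfl | hb
  · simp
  · field_simp

lemma Sf_nonneg' {Ω : Type*} [MeasureSpace Ω] [IsProbabilityMeasure (ℙ : Measure Ω)] {n : ℕ} {X : Fin n × Fin n → Ω → ℕ}
    {w : Fin n → Fin n → ℝ} (hw : ∀ i j, 0 ≤ w i j) (ω : Ω) : 0 ≤ Sf X w ω :=
  Finset.sum_nonneg fun t _ => mul_nonneg (hw _ _) (Yf_nonneg _ _ _)

lemma Sf_eq_NumS {Ω : Type*} [MeasureSpace Ω] [IsProbabilityMeasure (ℙ : Measure Ω)] {n : ℕ} (X : Fin n × Fin n → Ω → ℕ)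
    (w : Fin n → Fin n → ℝ) (ω : Ω) :
    Sf X w ω = NumS w (fun i j => (X (i, j) ω : ℝ)) := rfl

-- ===== convergence of normalized path statistics =====

lemma wconv {Ω : Type*} [MeasureSpace Ω] [IsProbabilityMeasure (ℙ : Measure Ω)]
    (X : (n : ℕ) → Fin n × Fin n → Ω → ℕ) (lam : (n : ℕ) → Fin n × Fin n → ℝ≥0) (C : ℝ≥0)
    (hmeas : ∀ n e, Measurable (X n e))
    (hindep : ∀ n, iIndepFun (X n) ℙ)
    (hd : ∀ n e, Measure.map (X n e) ℙ = poissonMeasure (lam n e))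
    (hb : ∀ n e, lam n e ≤ C)
    (w : (n : ℕ) → Fin n → Fin n → ℝ)
    (hw0 : ∀ n i j, 0 ≤ w n i j) (hw1 : ∀ n i j, w n i j ≤ 1)
    {θ : ℝ} (hθ : 0 < θ) :
    Tendsto (fun n => ℙ {ω | θ ≤ |Sf (X n) (w n) ω / (n:ℝ)^3
        - NumS (w n) (fun i j => (lam n (i, j) : ℝ)) / (n:ℝ)^3|}) atTop (𝓝 0) := by
  classical
  set B : ℝ := Mc C + 1 + (C:ℝ)^2 with hBdef
  have hMc := Mc_pos C
  have hB0 : 0 < B := by rw [hBdef]; positivity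
  have hupper : Tendsto (fun n : ℕ => ENNReal.ofReal (16 * Mc C / (θ^2 * (n:ℝ)^2)))
      atTop (𝓝 0) := by
    have hreal : Tendsto (fun n : ℕ => 16 * Mc C / (θ^2 * (n:ℝ)^2)) atTop (𝓝 0) := by
      apply Filter.Tendsto.div_atTop tendsto_const_nhds
      apply Filter.Tendsto.const_mul_atTop (by positivity : (0:ℝ) < θ^2)
      exact (tendsto_pow_atTop two_ne_zero).comp tendsto_natCast_atTop_atTop
    have := ENNReal.tendsto_ofReal hreal
    simpa using this
  apply tendsto_of_tendsto_of_tendsto_of_le_of_le' tendsto_const_nhds hupper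
  · exact Filter.Eventually.of_forall (fun n => zero_le)
  · have hev2 : ∀ᶠ n : ℕ in atTop, 2*B/θ ≤ ((n:ℝ))^2 ∧ 1 ≤ n := by
      refine Filter.Eventually.and ?_ (eventually_ge_atTop 1)
      exact Filter.Tendsto.eventually_ge_atTop
        ((tendsto_pow_atTop two_ne_zero).comp tendsto_natCast_atTop_atTop) (2*B/θ)
    filter_upwards [hev2] with n hn
    obtain ⟨hn2, hn1⟩ := hn
    have hn0 : (0:ℝ) < (n:ℝ) := by exact_mod_cast hn1
    have hn3 : (0:ℝ) < (n:ℝ)^3 := by positivity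
    set Tn : ℝ := NumS (w n) (fun i j => (lam n (i, j) : ℝ)) with hTndef
    have hTn_eq : Tn = ∑ t : Fin n × Fin n × Fin n,
        w n t.1 t.2.1 * ((lam n (E1 t) : ℝ) * (lam n (E2 t) : ℝ)) := rfl
    set ES : ℝ := ∫ ω', Sf (X n) (w n) ω' ∂ℙ with hESdef
    have hme : |ES - Tn| ≤ (n:ℝ) * B := by
      rw [hTn_eq]
      exact mean_err (hmeas n) (hindep n) (hd n) (hb n) (w n) (hw0 n) (hw1 n)
    have h5 : 2*B ≤ θ*(n:ℝ)^2 := by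
      rw [div_le_iff₀ hθ] at hn2
      linarith [hn2]
    have h4 : (n:ℝ)*B ≤ θ/2*(n:ℝ)^3 := by nlinarith [hn0.le, h5]
    have hincl : {ω | θ ≤ |Sf (X n) (w n) ω / (n:ℝ)^3 - Tn / (n:ℝ)^3|}
        ⊆ {ω | θ/2*(n:ℝ)^3 ≤ |Sf (X n) (w n) ω - ES|} := by
      intro ω hω
      simp only [Set.mem_setOf_eq] at hω ⊢
      have h1 : |Sf (X n) (w n) ω - Tn| = |Sf (X n) (w n) ω / (n:ℝ)^3 - Tn/(n:ℝ)^3| * (n:ℝ)^3 := by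
        rw [div_sub_div_same, abs_div, abs_of_pos hn3]
        field_simp
      have h2 : θ*(n:ℝ)^3 ≤ |Sf (X n) (w n) ω - Tn| := by
        rw [h1]
        exact mul_le_mul_of_nonneg_right hω hn3.le
      have h3 := abs_sub_abs_le_abs_sub (Sf (X n) (w n) ω - Tn) (ES - Tn)
      have h6 : Sf (X n) (w n) ω - Tn - (ES - Tn) = Sf (X n) (w n) ω - ES := by ring
      rw [h6] at h3
      have h7 : |ES - Tn| ≤ θ/2*(n:ℝ)^3 := le_trans hme h4
      linarith
    calc ℙ {ω | θ ≤ |Sf (X n) (w n) ω / (n:ℝ)^3 - Tn / (n:ℝ)^3|}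
        ≤ ℙ {ω | θ/2*(n:ℝ)^3 ≤ |Sf (X n) (w n) ω - ES|} := measure_mono hincl
      _ ≤ ENNReal.ofReal (4 * Mc C * (n:ℝ)^4 / (θ/2*(n:ℝ)^3)^2) := by
          exact cheb (hmeas n) (hindep n) (hd n) (hb n) (w n) (hw0 n) (hw1 n) (by positivity)
      _ = ENNReal.ofReal (16 * Mc C / (θ^2 * (n:ℝ)^2)) := by
          congr 1
          rw [div_eq_div_iff (by positivity) (by positivity)]
          ring

lemma pair_conv {Ω : Type*} [MeasureSpace Ω] [IsProbabilityMeasure (ℙ : Measure Ω)]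
    {G : Type*} [Fintype G] [DecidableEq G]
    (X : (n : ℕ) → Fin n × Fin n → Ω → ℕ) (lam : (n : ℕ) → Fin n × Fin n → ℝ≥0) (C : ℝ≥0)
    (g : (n : ℕ) → Fin n → G)
    (hmeas : ∀ n e, Measurable (X n e))
    (hindep : ∀ n, iIndepFun (X n) ℙ)
    (hd : ∀ n e, Measure.map (X n e) ℙ = poissonMeasure (lam n e))
    (hb : ∀ n e, lam n e ≤ C)
    {c : ℝ} (hc : 0 < c)
    (hdn : ∀ᶠ n in atTop, c < NumS wOne (fun i j => (lam n (i, j) : ℝ)) / (n:ℝ)^3)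
    (r s : G) {η : ℝ} (hη : 0 < η) :
    Tendsto (fun n => ℙ {ω | η ≤ |pathFrac2 (g n) (fun i j => (X n (i, j) ω : ℝ)) r s
        - pathFrac2 (g n) (fun i j => (lam n (i, j) : ℝ)) r s|}) atTop (𝓝 0) := by
  classical
  set θ : ℝ := min (η*c/8) (c/2) with hθdef
  have hθ : 0 < θ := lt_min (by positivity) (by positivity)
  have h1 := wconv X lam C hmeas hindep hd hb (fun n => wInd (g n) r s)
    (fun n i j => wInd_nonneg (g n) r s i j) (fun n i j => wInd_le_one (g n) r s i j) hθ
  have h2 := wconv X lam C hmeas hindep hd hb (fun n => wOne)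
    (fun n i j => zero_le_one) (fun n i j => le_refl 1) hθ
  have hsum : Tendsto (fun n =>
      ℙ {ω | θ ≤ |Sf (X n) (wInd (g n) r s) ω / (n:ℝ)^3
          - NumS (wInd (g n) r s) (fun i j => (lam n (i, j) : ℝ)) / (n:ℝ)^3|}
      + ℙ {ω | θ ≤ |Sf (X n) wOne ω / (n:ℝ)^3
          - NumS wOne (fun i j => (lam n (i, j) : ℝ)) / (n:ℝ)^3|}) atTop (𝓝 0) := by
    have := Filter.Tendsto.add h1 h2
    simpa using this
  apply tendsto_of_tendsto_of_tendsto_of_le_of_le' tendsto_const_nhds hsum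
  · exact Filter.Eventually.of_forall (fun n => zero_le)
  · filter_upwards [hdn, eventually_ge_atTop 1] with n hdnn hn1
    have hn0 : (0:ℝ) < (n:ℝ) := by exact_mod_cast hn1
    have hn3 : ((n:ℝ)^3) ≠ 0 := by positivity
    refine le_trans (measure_mono ?_) (measure_union_le _ _)
    intro ω hω
    by_contra hno
    simp only [Set.mem_union, Set.mem_setOf_eq, not_or, not_le] at hno
    obtain ⟨hA, hB⟩ := hno
    simp only [Set.mem_setOf_eq] at hω
    -- abbreviations
    set Amat : Fin n → Fin n → ℝ := fun i j => (X n (i, j) ω : ℝ) with hAmat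
    set Mmat : Fin n → Fin n → ℝ := fun i j => (lam n (i, j) : ℝ) with hMmat
    have hAnn : ∀ i j, 0 ≤ Amat i j := fun i j => Nat.cast_nonneg _
    have hMnn : ∀ i j, 0 ≤ Mmat i j := fun i j => (lam n (i,j)).coe_nonneg
    set sw : ℝ := Sf (X n) (wInd (g n) r s) ω / (n:ℝ)^3 with hsw
    set s1 : ℝ := Sf (X n) wOne ω / (n:ℝ)^3 with hs1
    set tw : ℝ := NumS (wInd (g n) r s) Mmat / (n:ℝ)^3 with htw
    set t1 : ℝ := NumS wOne Mmat / (n:ℝ)^3 with ht1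
    have hfrA : pathFrac2 (g n) Amat r s = sw / s1 := by
      rw [pathFrac2_eq_NumS, hsw, hs1, ← Sf_eq_NumS (X n) (wInd (g n) r s) ω,
        ← Sf_eq_NumS (X n) wOne ω, div_div_div_same hn3]
    have hfrM : pathFrac2 (g n) Mmat r s = tw / t1 := by
      rw [pathFrac2_eq_NumS, htw, ht1, div_div_div_same hn3]
    rw [hfrA, hfrM] at hω
    have hcontra : |sw / s1 - tw / t1| < η := by
      apply ratio_close hc hη hdnn
      · rw [hsw]
        exact div_nonneg (Sf_nonneg' (fun i j => wInd_nonneg (g n) r s i j) ω) (by positivity)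
      · rw [hsw, hs1]
        apply div_le_div_of_nonneg_right _ (by positivity)
        rw [Sf_eq_NumS, Sf_eq_NumS]
        exact NumS_le (fun i j => wInd_le_one (g n) r s i j) hAnn
      · rw [htw]
        exact div_nonneg (NumS_nonneg (fun i j => wInd_nonneg (g n) r s i j) hMnn)
          (by positivity)
      · rw [htw, ht1]
        apply div_le_div_of_nonneg_right _ (by positivity)
        exact NumS_le (fun i j => wInd_le_one (g n) r s i j) hMnn
      · exact hA
      · exact hB
      · exact min_le_left _ _
      · exact min_le_right _ _
    linarith [hω, hcontra]

/-- Proposition 3 of the paper: under the heterogeneous Poisson model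
with uniformly bounded means, a density condition, and a nondegeneracy condition on the
model marginals, the sampled assortativity on paths of length 2 converges in probability
to the model assortativity on paths of length 2. -/
theorem assort2_consistent
    {Ω : Type*} [MeasureSpace Ω] [IsProbabilityMeasure (ℙ : Measure Ω)]
    {G : Type*} [Fintype G] [DecidableEq G]
    (g : (n : ℕ) → Fin n → G)
    (A : (n : ℕ) → Fin n → Fin n → Ω → ℕ)
    (μ : (n : ℕ) → Fin n → Fin n → ℝ≥0) (C : ℝ≥0)
    (hindep : ∀ n, iIndepFun
      (fun p : Fin n × Fin n => A n p.1 p.2) ℙ)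
    (hdist : ∀ n (i j : Fin n), Measure.map (A n i j) ℙ = poissonMeasure (μ n i j))
    (hbound : ∀ n (i j : Fin n), μ n i j ≤ C)
    (hdense : 0 < Filter.liminf
      (fun n : ℕ =>
        (∑ k : Fin n, (∑ i : Fin n, (μ n i k : ℝ)) * (∑ j : Fin n, (μ n k j : ℝ)))
          / (n : ℝ) ^ 3) atTop)
    (hnondeg : ∃ δ > (0 : ℝ), ∀ n : ℕ,
      ∑ r : G, (∑ s : G, pathFrac2 (g n) (fun i j => (μ n i j : ℝ)) r s)
          * (∑ s : G, pathFrac2 (g n) (fun i j => (μ n i j : ℝ)) s r) ≤ 1 - δ) :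
    ∀ ε > 0, Tendsto
      (fun n : ℕ => ℙ {ω | ε ≤
        |assort2 (g n) (fun i j => (A n i j ω : ℝ))
          - assort2 (g n) (fun i j => (μ n i j : ℝ))|})
      atTop (nhds 0) := by
  classical
  intro ε hε
  obtain ⟨δ, hδ, hδall⟩ := hnondeg
  -- measurable modification
  have hAE : ∀ n (e : Fin n × Fin n), AEMeasurable (A n e.1 e.2) ℙ :=
    fun n e => aem_of_map_poisson (hdist n e.1 e.2)
  let X : (n : ℕ) → Fin n × Fin n → Ω → ℕ := fun n e => (hAE n e).mk (A n e.1 e.2)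
  have hXmeas : ∀ n e, Measurable (X n e) := fun n e => (hAE n e).measurable_mk
  have hXeq : ∀ n (e : Fin n × Fin n), A n e.1 e.2 =ᵐ[ℙ] X n e := fun n e => (hAE n e).ae_eq_mk
  have hXindep : ∀ n, iIndepFun (X n) ℙ := fun n =>
    iIndepFun_congr (hindep n) (fun e => hXeq n e)
  let lam : (n : ℕ) → Fin n × Fin n → ℝ≥0 := fun n e => μ n e.1 e.2
  have hXdist : ∀ n (e : Fin n × Fin n), Measure.map (X n e) ℙ = poissonMeasure (lam n e) := by
    intro n e
    rw [← Measure.map_congr (hXeq n e)]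
    exact hdist n e.1 e.2
  have hXb : ∀ n (e : Fin n × Fin n), lam n e ≤ C := fun n e => hbound n e.1 e.2
  -- density
  have hLrw : (fun n : ℕ =>
      (∑ k : Fin n, (∑ i : Fin n, (μ n i k : ℝ)) * (∑ j : Fin n, (μ n k j : ℝ)))
        / (n : ℝ) ^ 3)
      = fun n : ℕ => NumS wOne (fun i j => (lam n (i, j) : ℝ)) / (n:ℝ)^3 := by
    funext n
    congr 1
    exact (NumS_wOne_eq (fun i j => ((lam n (i, j)) : ℝ))).symm
  rw [hLrw] at hdense
  set L : ℝ := liminf (fun n : ℕ => NumS wOne (fun i j => (lam n (i, j) : ℝ)) / (n:ℝ)^3)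
    atTop with hLdef
  have hc : 0 < L/2 := by linarith
  have hbd : IsBoundedUnder (· ≥ ·) atTop
      (fun n : ℕ => NumS wOne (fun i j => (lam n (i, j) : ℝ)) / (n:ℝ)^3) := by
    refine ⟨0, ?_⟩
    rw [Filter.eventually_map]
    exact Filter.Eventually.of_forall fun n => div_nonneg
      (NumS_nonneg (fun _ _ => zero_le_one) (fun i j => (lam n (i, j)).coe_nonneg))
      (by positivity)
  have hdn : ∀ᶠ n in atTop,
      L/2 < NumS wOne (fun i j => (lam n (i, j) : ℝ)) / (n:ℝ)^3 :=
    eventually_lt_of_lt_liminf (by linarith) hbd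
  -- choice of η
  set m : ℝ := (Fintype.card G : ℝ) with hmdef
  have hm0 : (0:ℝ) ≤ m := Nat.cast_nonneg _
  set η : ℝ := min (δ/(4*m^2+1)) (ε*δ^2/(210*(m^2+1))) with hηdef
  have hη0 : 0 < η := lt_min (div_pos hδ (by positivity)) (div_pos (by positivity) (by positivity))
  -- per-pair convergence
  have hPAIR : ∀ p : G × G, Tendsto (fun n => ℙ {ω | η ≤
      |pathFrac2 (g n) (fun i j => (X n (i, j) ω : ℝ)) p.1 p.2
        - pathFrac2 (g n) (fun i j => (lam n (i, j) : ℝ)) p.1 p.2|}) atTop (𝓝 0) :=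
    fun p => pair_conv X lam C g hXmeas hXindep hXdist hXb hc hdn p.1 p.2 hη0
  have hsum : Tendsto (fun n => ∑ p : G × G, ℙ {ω | η ≤
      |pathFrac2 (g n) (fun i j => (X n (i, j) ω : ℝ)) p.1 p.2
        - pathFrac2 (g n) (fun i j => (lam n (i, j) : ℝ)) p.1 p.2|}) atTop (𝓝 0) := by
    have := tendsto_finset_sum (Finset.univ : Finset (G × G)) (fun p _ => hPAIR p)
    simpa using this
  apply tendsto_of_tendsto_of_tendsto_of_le_of_le' tendsto_const_nhds hsum
  · exact Filter.Eventually.of_forall (fun n => zero_le)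
  · refine Filter.Eventually.of_forall (fun n => ?_)
    -- transfer from A to X
    have htrans : ℙ {ω | ε ≤ |assort2 (g n) (fun i j => (A n i j ω : ℝ))
          - assort2 (g n) (fun i j => (μ n i j : ℝ))|}
        = ℙ {ω | ε ≤ |assort2 (g n) (fun i j => (X n (i, j) ω : ℝ))
          - assort2 (g n) (fun i j => (μ n i j : ℝ))|} := by
      apply measure_congr
      rw [Filter.eventuallyEq_set]
      have hall : ∀ᵐ ω ∂ℙ, ∀ e : Fin n × Fin n, A n e.1 e.2 ω = X n e ω :=
        ae_all_iff.2 fun e => hXeq n e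
      filter_upwards [hall] with ω hω
      have hmat : (fun i j => ((A n i j ω : ℝ))) = fun i j => ((X n (i, j) ω : ℝ)) := by
        funext i j
        rw [hω (i, j)]
      simp only [Set.mem_setOf_eq, hmat]
    rw [htrans]
    refine le_trans (measure_mono ?_) (measure_biUnion_finset_le Finset.univ _)
    intro ω hω
    simp only [Set.mem_setOf_eq] at hω
    by_contra hno
    simp only [Set.mem_iUnion, Set.mem_setOf_eq, not_exists, not_le, Finset.mem_univ] at hno
    have hcl : ∀ r s : G, |pathFrac2 (g n) (fun i j => (X n (i, j) ω : ℝ)) r s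
        - pathFrac2 (g n) (fun i j => ((μ n i j : ℝ))) r s| ≤ η := by
      intro r s
      exact le_of_lt (hno (r, s) trivial)
    have hη1mul : (4*m^2+1)*η ≤ δ := by
      have h1 : η ≤ δ/(4*m^2+1) := min_le_left _ _
      calc (4*m^2+1)*η ≤ (4*m^2+1)*(δ/(4*m^2+1)) :=
            mul_le_mul_of_nonneg_left h1 (by positivity)
        _ = δ := by field_simp
    have hdet := det_assort
      (fun r s => pathFrac2 (g n) (fun i j => ((X n (i, j) ω : ℝ))) r s)
      (fun r s => pathFrac2 (g n) (fun i j => ((μ n i j : ℝ))) r s) δ η hδ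
      (fun r s => pathFrac2_nonneg _ (fun i j => Nat.cast_nonneg _) r s)
      (pathFrac2_sum_le_one _ (fun i j => Nat.cast_nonneg _))
      (fun r s => pathFrac2_nonneg _ (fun i j => (μ n i j).coe_nonneg) r s)
      (pathFrac2_sum_le_one _ (fun i j => (μ n i j).coe_nonneg))
      (hδall n) (le_of_lt hη0) hη1mul hcl
    have hfinal : |assort2 (g n) (fun i j => ((X n (i, j) ω : ℝ)))
        - assort2 (g n) (fun i j => ((μ n i j : ℝ)))| ≤ 14*(m^2+1)*η/δ^2 := hdet
    have hlt : 14*(m^2+1)*η/δ^2 < ε := by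
      have hη2 : η ≤ ε*δ^2/(210*(m^2+1)) := min_le_right _ _
      rw [div_lt_iff₀ (by positivity)]
      calc 14*(m^2+1)*η ≤ 14*(m^2+1)*(ε*δ^2/(210*(m^2+1))) :=
            mul_le_mul_of_nonneg_left hη2 (by positivity)
        _ = ε*δ^2/15 := by field_simp; ring
        _ < ε*δ^2 := by nlinarith [mul_pos hε (pow_pos hδ 2)]
    linarith
end
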